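/- arXiv:1412.3570 — 6 statements merged into one kernel-verified Lean document; each statement's English description precedes it below -/
import Mathlib

section
/- Let f, g, h be polynomials in K[X₁,…,X_n] with f = g·h. Then the Newton polytope of f equals the Minkowski sum of the Newton polytopes of g and h: Newt(f) = Newt(g) + Newt(h). -/
open Pointwise

variable {K : Type*} {n : ℕ}

/-- The Newton polytope of a multivariate polynomial: the convex hull in `ℝⁿ` of the
exponent vectors of its nonzero monomials. -/
noncomputable def newtonPolytope [CommSemiring K] (f : MvPolynomial (Fin n) K) :
    Set (Fin n → ℝ) :=
  convexHull ℝ ((fun (m : Fin n →₀ ℕ) (i : Fin n) => (m i : ℝ)) '' ↑f.support)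

/-- Ostrowski's theorem: if `f = g · h`, then the Newton polytope of `f` is the
Minkowski sum of the Newton polytopes of `g` and `h`. -/
theorem newtonPolytope_mul [Field K] (f g h : MvPolynomial (Fin n) K)
    (hf : f = g * h) :
    newtonPolytope f = newtonPolytope g + newtonPolytope h := by
  classical
  set φ : (Fin n →₀ ℕ) → (Fin n → ℝ) := fun m i => (m i : ℝ) with hφ
  have φadd : ∀ u v : Fin n →₀ ℕ, φ (u + v) = φ u + φ v := by
    intro u v; funext i; simp [hφ]
  have φinj : Function.Injective φ := by
    intro u v huv
    ext i
    have := congrFun huv i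
    simp only [hφ] at this
    exact_mod_cast this
  set A : Set (Fin n → ℝ) := φ '' ↑g.support with hA
  set B : Set (Fin n → ℝ) := φ '' ↑h.support with hB
  have hAfin : A.Finite := (g.support.finite_toSet).image _
  have hBfin : B.Finite := (h.support.finite_toSet).image _
  have hABfin : (A + B).Finite := hAfin.add hBfin
  -- the sum of the polytopes is the hull of A + B
  have hsum : newtonPolytope g + newtonPolytope h = convexHull ℝ (A + B) := by
    rw [convexHull_add]; rfl
  -- easy inclusion
  have easy : newtonPolytope f ⊆ newtonPolytope g + newtonPolytope h := by
    rw [hsum]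
    apply convexHull_mono
    rintro p ⟨m, hm, rfl⟩
    have hm' : m ∈ g.support + h.support := by
      have := MvPolynomial.support_mul g h
      rw [← hf] at this
      exact this hm
    obtain ⟨u, hu, v, hv, rfl⟩ := Finset.mem_add.1 hm'
    exact ⟨φ u, ⟨u, hu, rfl⟩, φ v, ⟨v, hv, rfl⟩, (φadd u v).symm⟩
  -- hard inclusion
  have hard : newtonPolytope g + newtonPolytope h ⊆ newtonPolytope f := by
    rw [hsum]
    set P := convexHull ℝ (A + B) with hP
    have hPcomp : IsCompact P := hABfin.isCompact_convexHull ℝ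
    have hPconv : Convex ℝ P := convex_convexHull ℝ _
    have hextfin : (P.extremePoints ℝ).Finite :=
      hABfin.subset (extremePoints_convexHull_subset)
    have hKM : closure (convexHull ℝ (P.extremePoints ℝ)) = P :=
      closure_convexHull_extremePoints hPcomp hPconv
    have hclosed : IsClosed (convexHull ℝ (P.extremePoints ℝ)) :=
      hextfin.isClosed_convexHull ℝ
    rw [hclosed.closure_eq] at hKM
    -- every extreme point of P is an exponent of f
    have key : P.extremePoints ℝ ⊆
        (fun (m : Fin n →₀ ℕ) (i : Fin n) => (m i : ℝ)) '' ↑f.support := by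
      intro p hp
      have hpAB : p ∈ A + B := extremePoints_convexHull_subset hp
      obtain ⟨a, ⟨u₀, hu₀, rfl⟩, b, ⟨v₀, hv₀, rfl⟩, hpab⟩ := hpAB
      have hpab : φ u₀ + φ v₀ = p := hpab
      -- uniqueness of decomposition at an extreme point
      have uniq : ∀ u ∈ g.support, ∀ v ∈ h.support,
          φ u + φ v = p → u = u₀ ∧ v = v₀ := by
        intro u hu v hv huv
        have hq₁ : φ u + φ v₀ ∈ P :=
          subset_convexHull ℝ _ ⟨φ u, ⟨u, hu, rfl⟩, φ v₀, ⟨v₀, hv₀, rfl⟩, rfl⟩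
        have hq₂ : φ u₀ + φ v ∈ P :=
          subset_convexHull ℝ _ ⟨φ u₀, ⟨u₀, hu₀, rfl⟩, φ v, ⟨v, hv, rfl⟩, rfl⟩
        have hmid : p ∈ openSegment ℝ (φ u + φ v₀) (φ u₀ + φ v) := by
          refine ⟨1/2, 1/2, by norm_num, by norm_num, by norm_num, ?_⟩
          have hsum2 : (φ u + φ v₀) + (φ u₀ + φ v) = p + p := by
            rw [show p + p = (φ u + φ v) + (φ u₀ + φ v₀) from by rw [huv, hpab]]
            abel
          rw [← smul_add, hsum2, smul_add, ← add_smul]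
          norm_num
        obtain ⟨h₁, h₂⟩ := (mem_extremePoints.1 hp).2 _ hq₁ _ hq₂ hmid
        have hu' : φ u = φ u₀ := by
          have : φ u + φ v₀ = φ u₀ + φ v₀ := by rw [h₁, ← hpab]
          exact add_right_cancel this
        have hv' : φ v = φ v₀ := by
          have : φ u₀ + φ v = φ u₀ + φ v₀ := by rw [h₂, ← hpab]
          exact add_left_cancel this
        exact ⟨φinj hu', φinj hv'⟩
      -- the coefficient of f at u₀ + v₀ is nonzero
      have hcoeff : MvPolynomial.coeff (u₀ + v₀) f ≠ 0 := by
        rw [hf, MvPolynomial.coeff_mul]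
        have hmem : (u₀, v₀) ∈ Finset.HasAntidiagonal.antidiagonal (u₀ + v₀) :=
          Finset.HasAntidiagonal.mem_antidiagonal.2 rfl
        rw [Finset.sum_eq_single (u₀, v₀)]
        · exact mul_ne_zero (MvPolynomial.mem_support_iff.1 hu₀)
            (MvPolynomial.mem_support_iff.1 hv₀)
        · rintro ⟨u, v⟩ hmem' hne
          by_contra hz
          have hgu : MvPolynomial.coeff u g ≠ 0 := fun h0 => hz (by simp [h0])
          have hhv : MvPolynomial.coeff v h ≠ 0 := fun h0 => hz (by simp [h0])
          have hsum' : u + v = u₀ + v₀ := Finset.HasAntidiagonal.mem_antidiagonal.1 hmem'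
          have : φ u + φ v = p := by
            rw [← φadd, hsum', φadd, hpab]
          obtain ⟨rfl, rfl⟩ := uniq u (MvPolynomial.mem_support_iff.2 hgu)
            v (MvPolynomial.mem_support_iff.2 hhv) this
          exact hne rfl
        · intro habs; exact absurd hmem habs
      refine ⟨u₀ + v₀, MvPolynomial.mem_support_iff.2 hcoeff, ?_⟩
      show φ (u₀ + v₀) = p
      rw [φadd, hpab]
    calc P = convexHull ℝ (P.extremePoints ℝ) := hKM.symm
      _ ⊆ convexHull ℝ _ := convexHull_mono key
      _ = newtonPolytope f := rfl
  exact Set.Subset.antisymm easy hard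
end

section
/- Let f ∈ K[X₁,…,X_n] be a unidimensional polynomial of direction δ ∈ ℤⁿ. Then there exists a unique univariate polynomial f_π ∈ K[Z] of valuation 0 such that f(X) = X^a · f_π(X^δ) for some a ∈ ℤⁿ; moreover this a is necessarily in ℕⁿ. -/
variable {K : Type*} {n : ℕ}

/-- The Laurent polynomial ring `K[X₁^{±1}, …, X_n^{±1}]`, in which monomials with
integer exponent vectors such as `X^δ` make sense. -/
abbrev LaurentRing (K : Type*) [CommSemiring K] (n : ℕ) :=
  AddMonoidAlgebra K (Fin n →₀ ℤ)

/-- `f` has only nonnegative exponents, i.e. `f` is an ordinary polynomial. -/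
def HasNatSupport [CommSemiring K] (f : LaurentRing K n) : Prop :=
  ∀ m ∈ f.coeff.support, ∀ i, (0 : ℤ) ≤ m i

/-- A polynomial is unidimensional of direction `δ` if it has at least two monomials
and the difference of the exponent vectors of any two of its monomials is an integer
multiple of `δ`. -/
def Unidimensional [CommSemiring K] (δ : Fin n →₀ ℤ) (f : LaurentRing K n) : Prop :=
  2 ≤ f.coeff.support.card ∧ ∀ a ∈ f.coeff.support, ∀ b ∈ f.coeff.support, ∃ l : ℤ, a - b = l • δ

/-- The substitution `Z ↦ X^δ` applied to a univariate polynomial `p ∈ K[Z]`. -/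
noncomputable def substMonomial [CommSemiring K] (δ : Fin n →₀ ℤ) (p : Polynomial K) :
    LaurentRing K n :=
  p.sum fun m c => AddMonoidAlgebra.single (m • δ) c

/-- `p` is the univariate projection of `f` in direction `δ`: `p` has valuation `0`
and `f = X^a · p(X^δ)` for some `a ∈ ℤⁿ`. -/
def IsProjection [CommSemiring K] (δ : Fin n →₀ ℤ) (f : LaurentRing K n)
    (p : Polynomial K) : Prop :=
  p.coeff 0 ≠ 0 ∧ ∃ a : Fin n →₀ ℤ, f = AddMonoidAlgebra.single a 1 * substMonomial δ p

/-- Coerce an element of the Laurent ring to a finitely supported function. -/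
def UniProjAux.lc [CommSemiring K] (g : LaurentRing K n) : (Fin n →₀ ℤ) →₀ K := g.coeff

namespace UniProjAux

lemma nsmul_inj {δ : Fin n →₀ ℤ} (hδ : δ ≠ 0) {k l : ℕ} (h : k • δ = l • δ) : k = l := by
  have h' : (k : ℤ) • δ = (l : ℤ) • δ := by
    rwa [Nat.cast_smul_eq_nsmul, Nat.cast_smul_eq_nsmul]
  exact_mod_cast smul_left_injective ℤ hδ h'

lemma mul_single_subst [CommSemiring K] (δ a : Fin n →₀ ℤ) (p : Polynomial K) :
    AddMonoidAlgebra.single a 1 * substMonomial δ p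
      = ∑ m ∈ p.support, AddMonoidAlgebra.single (a + m • δ) (p.coeff m) := by
  rw [substMonomial, Polynomial.sum, Finset.mul_sum]
  exact Finset.sum_congr rfl fun m hm => by
    rw [AddMonoidAlgebra.single_mul_single, one_mul]

lemma apply_mul_single_subst [CommSemiring K] (δ a x : Fin n →₀ ℤ) (p : Polynomial K) :
    lc (AddMonoidAlgebra.single a 1 * substMonomial δ p) x
      = ∑ m ∈ p.support, if a + m • δ = x then p.coeff m else 0 := by
  rw [mul_single_subst]
  rw [show lc (∑ m ∈ p.support, AddMonoidAlgebra.single (a + m • δ) (p.coeff m))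
      = ∑ m ∈ p.support, Finsupp.single (a + m • δ) (p.coeff m) from AddMonoidAlgebra.coeff_sum _ _]
  rw [Finsupp.finset_sum_apply]
  exact Finset.sum_congr rfl fun m hm => Finsupp.single_apply

lemma eval_at [CommSemiring K] {δ : Fin n →₀ ℤ} (hδ : δ ≠ 0) (a : Fin n →₀ ℤ)
    (p : Polynomial K) (k : ℕ) :
    lc (AddMonoidAlgebra.single a 1 * substMonomial δ p) (a + k • δ) = p.coeff k := by
  rw [apply_mul_single_subst]
  have : ∀ m ∈ p.support, (if a + m • δ = a + k • δ then p.coeff m else 0)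
      = if m = k then p.coeff m else 0 := by
    intro m hm
    congr 1
    simp only [eq_iff_iff, add_right_inj]
    exact ⟨fun h => nsmul_inj hδ h, fun h => by rw [h]⟩
  rw [Finset.sum_congr rfl this, Finset.sum_ite_eq' p.support k p.coeff]
  split_ifs with h
  · rfl
  · exact (Polynomial.notMem_support_iff.mp h).symm

lemma mem_support_rep [CommSemiring K] {δ : Fin n →₀ ℤ} (a x : Fin n →₀ ℤ)
    (p : Polynomial K) (hx : x ∈ (AddMonoidAlgebra.single a 1 * substMonomial δ p).coeff.support) :
    ∃ k : ℕ, x = a + k • δ := by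
  by_contra h
  push_neg at h
  have : lc (AddMonoidAlgebra.single a 1 * substMonomial δ p) x = 0 := by
    rw [apply_mul_single_subst]
    exact Finset.sum_eq_zero fun m hm => if_neg fun he => h m he.symm
  exact Finsupp.mem_support_iff.mp hx this

/-- If `f = X^a · p(X^δ)` with `p.coeff 0 ≠ 0`, then `a ∈ f.coeff.support`. -/
lemma base_mem_support [CommSemiring K] {δ : Fin n →₀ ℤ} (hδ : δ ≠ 0)
    {f : LaurentRing K n} {a : Fin n →₀ ℤ} {p : Polynomial K} (hp : p.coeff 0 ≠ 0)
    (hrep : f = AddMonoidAlgebra.single a 1 * substMonomial δ p) : a ∈ f.coeff.support := by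
  rw [Finsupp.mem_support_iff]
  have : lc f a = p.coeff 0 := by
    rw [hrep]
    have := eval_at (K := K) hδ a p 0
    rwa [zero_smul, add_zero] at this
  rw [show f.coeff a = lc f a from rfl, this]
  exact hp

end UniProjAux

open UniProjAux

/-- Existence and uniqueness of the univariate projection of a unidimensional
polynomial `f` of direction `δ`: there is a unique `f_π ∈ K[Z]` of valuation `0`
with `f = X^a · f_π(X^δ)` for some `a ∈ ℤⁿ`; moreover such an `a` necessarily lies
in `ℕⁿ`. Here `δ` is a direction: primitive, with first nonzero coordinate positive. -/
theorem exists_unique_projection [Field K]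
    (δ : Fin n →₀ ℤ)
    (hprim : ∀ e : ℤ, (∀ i, e ∣ δ i) → IsUnit e)
    (hpos : ∀ i : Fin n, (∀ j : Fin n, j < i → δ j = 0) → 0 ≤ δ i)
    (f : LaurentRing K n) (hf : HasNatSupport f) (hu : Unidimensional δ f) :
    (∃! p : Polynomial K, IsProjection δ f p) ∧
      ∀ (p : Polynomial K) (a : Fin n →₀ ℤ), p.coeff 0 ≠ 0 →
        f = AddMonoidAlgebra.single a 1 * substMonomial δ p → ∀ i, (0 : ℤ) ≤ a i := by
  classical
  obtain ⟨hcard, hdiff⟩ := hu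
  -- δ ≠ 0
  have hδ : δ ≠ 0 := by
    obtain ⟨x, hx, y, hy, hxy⟩ := Finset.one_lt_card.mp hcard
    obtain ⟨l, hl⟩ := hdiff x hx y hy
    intro h0
    rw [h0, smul_zero] at hl
    exact hxy (sub_eq_zero.mp hl)
  -- base point
  have hne : f.coeff.support.Nonempty := Finset.card_pos.mp (by omega)
  obtain ⟨b₀, hb₀⟩ := hne
  set lfun : (Fin n →₀ ℤ) → ℤ :=
    fun m => if h : ∃ l : ℤ, m - b₀ = l • δ then h.choose else 0 with hlfun_def
  have hlfun : ∀ m ∈ f.coeff.support, m - b₀ = lfun m • δ := by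
    intro m hm
    have h := hdiff m hm b₀ hb₀
    simp only [hlfun_def, dif_pos h]
    exact h.choose_spec
  set T := f.coeff.support.image lfun with hT
  have hTne : T.Nonempty := ⟨lfun b₀, Finset.mem_image_of_mem _ hb₀⟩
  set L := T.min' hTne with hLdef
  have hL1 : ∀ m ∈ f.coeff.support, L ≤ lfun m :=
    fun m hm => Finset.min'_le _ _ (Finset.mem_image_of_mem _ hm)
  obtain ⟨m₁, hm₁, hm₁L⟩ := Finset.mem_image.mp (Finset.min'_mem T hTne)
  set a₀ := b₀ + L • δ with ha₀
  set kfun : (Fin n →₀ ℤ) → ℕ := fun m => (lfun m - L).toNat with hkfun_def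
  have hkey : ∀ m ∈ f.coeff.support, m = a₀ + (kfun m) • δ := by
    intro m hm
    have h1 : m = b₀ + lfun m • δ := by
      have h := hlfun m hm
      rw [sub_eq_iff_eq_add] at h
      exact h.trans (add_comm _ _)
    have hc : ((kfun m : ℤ)) = lfun m - L := Int.toNat_of_nonneg (by linarith [hL1 m hm])
    have h2 : (kfun m) • δ = (lfun m - L) • δ := by
      rw [← hc, Nat.cast_smul_eq_nsmul]
    rw [h2, ha₀, add_assoc, ← add_smul, add_sub_cancel]
    exact h1
  have hinj : ∀ m ∈ f.coeff.support, ∀ m' ∈ f.coeff.support, kfun m = kfun m' → m = m' := by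
    intro m hm m' hm' h
    rw [hkey m hm, hkey m' hm', h]
  -- the projection polynomial
  set p : Polynomial K := ∑ m ∈ f.coeff.support, Polynomial.monomial (kfun m) (lc f m) with hp_def
  have hpcoeff : ∀ m₀ ∈ f.coeff.support, p.coeff (kfun m₀) = lc f m₀ := by
    intro m₀ hm₀
    rw [hp_def, Polynomial.finset_sum_coeff]
    rw [Finset.sum_congr rfl (fun m hm => Polynomial.coeff_monomial)]
    rw [Finset.sum_eq_single_of_mem m₀ hm₀]
    · rw [if_pos rfl]
    · intro m hm hne
      exact if_neg fun h => hne (hinj m hm m₀ hm₀ h)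
  have hpcoeff0 : ∀ j, j ∉ f.coeff.support.image kfun → p.coeff j = 0 := by
    intro j hj
    rw [hp_def, Polynomial.finset_sum_coeff]
    rw [Finset.sum_congr rfl (fun m hm => Polynomial.coeff_monomial)]
    exact Finset.sum_eq_zero fun m hm => if_neg fun h => hj (Finset.mem_image.mpr ⟨m, hm, h⟩)
  have hsupp_p : p.support ⊆ f.coeff.support.image kfun := by
    intro j hj
    by_contra h
    exact Polynomial.mem_support_iff.mp hj (hpcoeff0 j h)
  -- f = X^{a₀} ⬝ p(X^δ)
  have heqf : f = AddMonoidAlgebra.single a₀ 1 * substMonomial δ p := by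
    have : lc f = lc (AddMonoidAlgebra.single a₀ 1 * substMonomial δ p) := by
      ext x
      rw [apply_mul_single_subst]
      have hsum : (∑ m ∈ p.support, if a₀ + m • δ = x then p.coeff m else 0)
          = ∑ m ∈ f.coeff.support.image kfun, if a₀ + m • δ = x then p.coeff m else 0 :=
        Finset.sum_subset hsupp_p (fun j _ hj => by
          rw [Polynomial.notMem_support_iff.mp hj, ite_self])
      rw [hsum, Finset.sum_image fun m hm m' hm' h => hinj m hm m' hm' h]
      have : ∀ m ∈ f.coeff.support,
          (if a₀ + (kfun m) • δ = x then p.coeff (kfun m) else 0)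
            = if m = x then lc f m else 0 := by
        intro m hm
        rw [hpcoeff m hm, ← hkey m hm]
      rw [Finset.sum_congr rfl this, Finset.sum_ite_eq' f.coeff.support x (lc f)]
      split_ifs with h
      · rfl
      · exact Finsupp.notMem_support_iff.mp h
    exact AddMonoidAlgebra.coeff_injective this
  -- valuation 0
  have hp0 : p.coeff 0 ≠ 0 := by
    have hk1 : kfun m₁ = 0 := by
      simp only [hkfun_def, hm₁L]
      omega
    have := hpcoeff m₁ hm₁
    rw [hk1] at this
    rw [this]
    exact Finsupp.mem_support_iff.mp hm₁
  -- main structure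
  have hbase : ∀ (q : Polynomial K) (a : Fin n →₀ ℤ), q.coeff 0 ≠ 0 →
      f = AddMonoidAlgebra.single a 1 * substMonomial δ q → a ∈ f.coeff.support :=
    fun q a hq hrep => base_mem_support hδ hq hrep
  refine ⟨⟨p, ⟨hp0, a₀, heqf⟩, ?_⟩, fun q a hq hrep i => hf a (hbase q a hq hrep) i⟩
  -- uniqueness
  rintro q ⟨hq0, a, hrep⟩
  -- the base points coincide
  have haf : a ∈ f.coeff.support := hbase q a hq0 hrep
  have ha₀f : a₀ ∈ f.coeff.support := hbase p a₀ hp0 heqf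
  obtain ⟨k, hk⟩ : ∃ k : ℕ, a₀ = a + k • δ := by
    rw [hrep] at ha₀f; exact mem_support_rep a a₀ q ha₀f
  obtain ⟨k', hk'⟩ : ∃ k' : ℕ, a = a₀ + k' • δ := by
    rw [heqf] at haf; exact mem_support_rep a₀ a p haf
  have hkk' : a = a + (k + k') • δ := by
    rw [add_smul]
    calc a = a₀ + k' • δ := hk'
    _ = a + k • δ + k' • δ := by rw [hk]
    _ = a + (k • δ + k' • δ) := by rw [add_assoc]
  have hk0 : (k + k') • δ = (0 : ℕ) • δ := by
    rw [zero_smul]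
    have := hkk'
    nth_rewrite 1 [show a = a + (0 : Fin n →₀ ℤ) from (add_zero a).symm] at this
    exact (add_left_cancel this).symm
  have : k + k' = 0 := nsmul_inj hδ hk0
  have hkzero : k = 0 := by omega
  have haa : a = a₀ := by rw [hk, hkzero, zero_smul, add_zero]
  -- coefficients coincide
  ext j
  have h1 : lc f (a₀ + j • δ) = q.coeff j := by
    rw [hrep, ← haa]; exact eval_at hδ a q j
  have h2 : lc f (a₀ + j • δ) = p.coeff j := by
    rw [heqf]; exact eval_at hδ a₀ p j
  rw [← h1, ← h2]
end

section
/- Let f and g ∈ K[X₁,…,X_n] be unidimensional polynomials of the same direction δ, with univariate projections f_π and g_π ∈ K[Z] respectively. Then mult_g(f) = mult_{g_π}(f_π). -/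
variable {K : Type*} {n : ℕ}

/-- The multiplicity of `g` as a factor of `f`, i.e. the largest `μ` with `g ^ μ ∣ f`. -/
noncomputable def multOf {R : Type*} [CommRing R] (g f : R) : ℕ :=
  sSup {μ : ℕ | g ^ μ ∣ f}


/-- The embedding `ℤ →+ ℤⁿ`, `m ↦ m • δ`. -/
noncomputable def dirHom (δ : Fin n →₀ ℤ) : ℤ →+ (Fin n →₀ ℤ) :=
  zmultiplesHom (Fin n →₀ ℤ) δ

@[simp] lemma dirHom_apply (δ : Fin n →₀ ℤ) (m : ℤ) : dirHom δ m = m • δ := rfl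

/-- The ring embedding of univariate Laurent polynomials into `LaurentRing` induced by
`m ↦ m • δ`. -/
noncomputable def dirRingHom (K : Type*) [Field K] (δ : Fin n →₀ ℤ) :
    AddMonoidAlgebra K ℤ →+* LaurentRing K n :=
  AddMonoidAlgebra.mapDomainRingHom K (dirHom δ)

lemma dirRingHom_apply [Field K] (δ : Fin n →₀ ℤ) (z : AddMonoidAlgebra K ℤ) :
    dirRingHom K δ z = AddMonoidAlgebra.mapDomain (⇑(dirHom δ)) z := rfl

/-- `substMonomial` is the composition of `toLaurent` and `dirRingHom`. -/
lemma substMonomial_eq_mapDomain [Field K] (δ : Fin n →₀ ℤ) (p : Polynomial K) :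
    substMonomial δ p = dirRingHom K δ p.toLaurent := by
  induction p using Polynomial.induction_on' with
  | add p q hp hq =>
      rw [map_add, map_add, ← hp, ← hq]
      unfold substMonomial
      rw [Polynomial.sum_add_index]
      · intro i; exact AddMonoidAlgebra.single_zero _
      · intro a b₁ b₂; exact AddMonoidAlgebra.single_add _ _ _
  | monomial m c =>
      unfold substMonomial
      rw [Polynomial.sum_monomial_index c (fun m c => AddMonoidAlgebra.single (m • δ) c)
          (AddMonoidAlgebra.single_zero _),
        Polynomial.toLaurent_apply, Polynomial.toFinsupp_monomial, dirRingHom_apply,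
        AddMonoidAlgebra.mapDomain_single, AddMonoidAlgebra.mapDomain_single, dirHom_apply,
        natCast_zsmul]

/-- If `f` and `g` are unidimensional polynomials of the same direction `δ`, with
univariate projections `f_π` and `g_π`, then `mult_g(f) = mult_{g_π}(f_π)`.
(Divisibility by `g^μ` is taken in the Laurent polynomial ring, i.e. up to monomial
factors, as in the lifting/projection correspondence.) -/
theorem multOf_eq_multOf_projection [Field K]
    (δ : Fin n →₀ ℤ) (f g : LaurentRing K n)
    (hfN : HasNatSupport f) (hgN : HasNatSupport g)
    (hfu : Unidimensional δ f) (hgu : Unidimensional δ g)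
    (fπ gπ : Polynomial K)
    (hfπ : IsProjection δ f fπ) (hgπ : IsProjection δ g gπ) :
    multOf g f = multOf gπ fπ := by
  classical
  obtain ⟨hf0, a, hfa⟩ := hfπ
  obtain ⟨hg0, b, hgb⟩ := hgπ
  -- δ ≠ 0
  have hδ : δ ≠ 0 := by
    obtain ⟨hcard, hdiff⟩ := hfu
    obtain ⟨x, hx, y, hy, hxy⟩ := Finset.one_lt_card.mp hcard
    obtain ⟨l, hl⟩ := hdiff x hx y hy
    intro h
    rw [h, smul_zero] at hl
    exact hxy (by rwa [sub_eq_zero] at hl)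
  have he : Function.Injective ⇑(dirHom (n := n) δ) := by
    obtain ⟨i, hi⟩ : ∃ i, δ i ≠ 0 := by
      by_contra h
      push_neg at h
      exact hδ (Finsupp.ext h)
    intro x y hxy
    have h2 := congrArg (fun v : Fin n →₀ ℤ => v i) hxy
    simp only [dirHom_apply, Finsupp.smul_apply, smul_eq_mul] at h2
    exact mul_right_cancel₀ hi h2
  have hι : Function.Injective ⇑(dirRingHom K (n := n) δ) := fun x y hxy => by
    rw [dirRingHom_apply, dirRingHom_apply] at hxy
    exact AddMonoidAlgebra.mapDomain_injective he hxy
  -- membership in the image subgroup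
  set Q : (Fin n →₀ ℤ) → Prop := fun x => x ∈ Set.range ⇑(dirHom (n := n) δ) with hQ_def
  have hQadd : ∀ {x y}, Q x → Q y → Q (x + y) := by
    rintro x y ⟨m, rfl⟩ ⟨k, rfl⟩
    exact ⟨m + k, map_add _ m k⟩
  have hQcancel : ∀ {x y}, Q x → Q (x + y) → Q y := by
    rintro x y ⟨m, rfl⟩ ⟨k, hk⟩
    refine ⟨k - m, ?_⟩
    rw [map_sub, hk]
    abel
  have hsupι : ∀ (z : AddMonoidAlgebra K ℤ), ∀ x ∈ (dirRingHom K δ z).coeff.support, Q x := by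
    intro z x hx
    rw [dirRingHom_apply] at hx
    obtain ⟨m, _, rfl⟩ := Finset.mem_image.mp (Finsupp.mapDomain_support (s := z.coeff) hx)
    exact ⟨m, rfl⟩
  -- the key divisibility equivalence
  have key : ∀ μ : ℕ, g ^ μ ∣ f ↔ gπ ^ μ ∣ fπ := by
    intro μ
    have hgpow : g ^ μ
        = AddMonoidAlgebra.single (μ • b) (1 : K)
            * dirRingHom K δ (Polynomial.toLaurent gπ) ^ μ := by
      rw [hgb, mul_pow, AddMonoidAlgebra.single_pow, one_pow, substMonomial_eq_mapDomain]
    set P : LaurentRing K n := dirRingHom K δ (Polynomial.toLaurent gπ) with hP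
    set F : LaurentRing K n := dirRingHom K δ (Polynomial.toLaurent fπ) with hF
    constructor
    · rintro ⟨h, hh⟩
      set h' : LaurentRing K n := AddMonoidAlgebra.single (μ • b - a) (1 : K) * h with hh'
      set h1 : LaurentRing K n := AddMonoidAlgebra.ofCoeff (h'.coeff.filter Q) with hh1
      set h2 : LaurentRing K n := AddMonoidAlgebra.ofCoeff (h'.coeff.filter (fun x => ¬ Q x)) with hh2
      have keyF : F = P ^ μ * h' := by
        have hu : AddMonoidAlgebra.single (-a) (1 : K) * f = F := by
          rw [hfa, ← mul_assoc, AddMonoidAlgebra.single_mul_single, neg_add_cancel,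
            one_mul, ← AddMonoidAlgebra.one_def, one_mul, substMonomial_eq_mapDomain]
        rw [← hu, hh, hgpow, hh']
        have hs : AddMonoidAlgebra.single (-a) (1 : K)
            * AddMonoidAlgebra.single (μ • b) (1 : K)
            = AddMonoidAlgebra.single (μ • b - a) (1 : K) := by
          rw [AddMonoidAlgebra.single_mul_single, one_mul]
          congr 1
          abel
        calc AddMonoidAlgebra.single (-a) (1 : K)
              * (AddMonoidAlgebra.single (μ • b) 1 * P ^ μ * h)
            = (AddMonoidAlgebra.single (-a) (1 : K)
                * AddMonoidAlgebra.single (μ • b) 1)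
                * P ^ μ * h := by ring
          _ = P ^ μ * (AddMonoidAlgebra.single (μ • b - a) (1 : K) * h) := by
              rw [hs]; ring
      -- split h' into the part supported on the image subgroup and the rest
      have hsplit : h1 + h2 = h' := AddMonoidAlgebra.coeff_injective (Finsupp.filter_pos_add_filter_neg h'.coeff Q)
      have hzero : F - P ^ μ * h1 = P ^ μ * h2 := by
        rw [keyF, ← hsplit, mul_add, add_sub_cancel_left]
      have hsuppPpow : ∀ x ∈ (P ^ μ).coeff.support, Q x := by
        have hPp : P ^ μ = dirRingHom K δ (Polynomial.toLaurent gπ ^ μ) := by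
          rw [map_pow]
        rw [hPp]
        exact hsupι _
      have h3 : P ^ μ * h2 = 0 := by
        rw [← AddMonoidAlgebra.coeff_eq_zero, ← Finsupp.support_eq_empty, Finset.eq_empty_iff_forall_notMem]
        intro x hx
        have hxQ : Q x := by
          have hx' : x ∈ (F.coeff - (P ^ μ * h1).coeff).support := by
              rw [← AddMonoidAlgebra.coeff_sub, hzero]; exact hx
          rcases Finset.mem_union.mp (Finsupp.support_sub hx') with hmem | hmem
          · exact hsupι _ x hmem
          · obtain ⟨y, hy, z, hz, rfl⟩ :=
              Finset.mem_add.mp (AddMonoidAlgebra.support_coeff_mul_subset _ _ hmem)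
            have hz' : Q z := by
              rw [hh1, AddMonoidAlgebra.coeff_ofCoeff, Finsupp.support_filter, Finset.mem_filter] at hz
              exact hz.2
            exact hQadd (hsuppPpow y hy) hz'
        obtain ⟨y, hy, z, hz, rfl⟩ :=
          Finset.mem_add.mp (AddMonoidAlgebra.support_coeff_mul_subset _ _ hx)
        have hz' : ¬ Q z := by
          rw [hh2, AddMonoidAlgebra.coeff_ofCoeff, Finsupp.support_filter, Finset.mem_filter] at hz
          exact hz.2
        exact hz' (hQcancel (hsuppPpow y hy) hxQ)
      have hFfin : F = P ^ μ * h1 := by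
        have h4 := hzero
        rw [h3] at h4
        exact sub_eq_zero.mp h4
      -- pull back the cofactor along the ring embedding
      have hsupp1 : ↑(h1.coeff : (Fin n →₀ ℤ) →₀ K).support ⊆ Set.range ⇑(dirHom (n := n) δ) := by
        intro x hx
        rw [Finset.mem_coe, hh1, AddMonoidAlgebra.coeff_ofCoeff, Finsupp.support_filter, Finset.mem_filter] at hx
        exact hx.2
      set hhat : AddMonoidAlgebra K ℤ :=
        AddMonoidAlgebra.comapDomain ⇑(dirHom (n := n) δ) he h1 with hhat_def
      have hmap : dirRingHom K δ hhat = h1 := by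
        rw [dirRingHom_apply, hhat_def]
        exact AddMonoidAlgebra.mapDomain_comapDomain hsupp1 he
      have hfg : Polynomial.toLaurent fπ = Polynomial.toLaurent gπ ^ μ * hhat := by
        apply hι
        rw [map_mul, map_pow, hmap]
        exact hFfin
      obtain ⟨N, q, hq⟩ := LaurentPolynomial.exists_T_pow hhat
      have heq : fπ * Polynomial.X ^ N = gπ ^ μ * q := by
        apply Polynomial.toLaurent_injective
        rw [map_mul, map_mul, Polynomial.toLaurent_X_pow, map_pow, hfg, hq]
        ring
      have hcopX : IsCoprime gπ (Polynomial.X : Polynomial K) := by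
        refine (Polynomial.prime_X.coprime_iff_not_dvd.mpr ?_).symm
        intro hd
        exact hg0 (Polynomial.X_dvd_iff.mp hd)
      exact (hcopX.pow).dvd_of_dvd_mul_right ⟨q, heq⟩
    · rintro ⟨q, hq⟩
      refine ⟨AddMonoidAlgebra.single (a - μ • b) (1 : K)
        * dirRingHom K δ (Polynomial.toLaurent q), ?_⟩
      rw [hfa, substMonomial_eq_mapDomain, hq, map_mul, map_mul, map_pow, map_pow, ← hP, hgpow]
      calc AddMonoidAlgebra.single a (1 : K) * (P ^ μ * dirRingHom K δ (Polynomial.toLaurent q))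
          = (AddMonoidAlgebra.single (μ • b) (1 : K)
              * AddMonoidAlgebra.single (a - μ • b) (1 : K))
              * (P ^ μ * dirRingHom K δ (Polynomial.toLaurent q)) := by
            rw [AddMonoidAlgebra.single_mul_single, one_mul]
            congr 2
            abel
        _ = AddMonoidAlgebra.single (μ • b) (1 : K) * P ^ μ
              * (AddMonoidAlgebra.single (a - μ • b) (1 : K)
                * dirRingHom K δ (Polynomial.toLaurent q)) := by ring
  unfold multOf
  congr 1
  ext μ
  exact key μ
end

section
/- If f = g·h is a product of two unidimensional polynomials of the same direction δ, then the univariate projection of f equals the product of the univariate projections of g and h: f_π = g_π · h_π. -/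
variable {K : Type*} {n : ℕ}

lemma substMonomial_eq_aux [CommSemiring K] (δ : Fin n →₀ ℤ) (p : Polynomial K) :
    substMonomial δ p = AddMonoidAlgebra.mapDomain (multiplesHom _ δ) p.toFinsupp := by
  simp only [substMonomial, AddMonoidAlgebra.mapDomain, Finsupp.mapDomain,
    AddMonoidAlgebra.ofCoeff_finsuppSum, AddMonoidAlgebra.ofCoeff_single]
  rfl

lemma substMonomial_mul_aux [CommSemiring K] (δ : Fin n →₀ ℤ) (p q : Polynomial K) :
    substMonomial δ (p * q) = substMonomial δ p * substMonomial δ q := by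
  simp only [substMonomial_eq_aux, Polynomial.toFinsupp_mul]
  exact AddMonoidAlgebra.mapDomain_mul (multiplesHom _ δ) _ _

/-- If `f = g·h` with `g, h` unidimensional of the same direction `δ`, then the
univariate projection of `f` is the product of those of `g` and `h`. -/
theorem isProjection_mul [CommRing K] [IsDomain K]
    (δ : Fin n →₀ ℤ) (g h : LaurentRing K n)
    (hgu : Unidimensional δ g) (hhu : Unidimensional δ h)
    (gπ hπ : Polynomial K)
    (hgπ : IsProjection δ g gπ) (hhπ : IsProjection δ h hπ) :
    IsProjection δ (g * h) (gπ * hπ) := by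
  obtain ⟨hg0, a, hg⟩ := hgπ
  obtain ⟨hh0, b, hh⟩ := hhπ
  refine ⟨by simpa using mul_ne_zero hg0 hh0, a + b, ?_⟩
  rw [hg, hh, substMonomial_mul_aux]
  rw [show (AddMonoidAlgebra.single (a + b) 1 : LaurentRing K n)
      = AddMonoidAlgebra.single a 1 * AddMonoidAlgebra.single b 1 by
    rw [AddMonoidAlgebra.single_mul_single, one_mul]]
  ring
end

section
/- Let φ be a Puiseux series with minimal polynomial g ∈ K[X,Y] of bidegree (d_X, d_Y), α, β ≥ k nonnegative integers, and ψ(X) = X^α φ(X)^β. Then ψ^{(k)}(X) = X^{α−k} φ(X)^{β−k} · s_k(X, φ(X)) / g_Y(X, φ(X))^{2k−1}, where s_k ∈ K[X,Y] satisfies deg_X(s_k) ≤ (2k−1)d_X and deg_Y(s_k) ≤ (2k−1)d_Y − (k−1). -/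
open HahnSeries

variable {K L : Type*}

/-- Formal derivative of a Hahn/Puiseux series in one variable. -/
noncomputable def Dp [Field L] (f : HahnSeries ℚ L) : HahnSeries ℚ L where
  coeff q := (q + 1) • f.coeff (q + 1)
  isPWO_support' := by
    have himg := f.isPWO_support.image_of_monotone
      (f := fun q : ℚ => q - 1) (fun a b hab => by simpa using sub_le_sub_right hab 1)
    refine himg.mono fun q hq => ?_
    have hf : f.coeff (q + 1) ≠ 0 := by
      intro h
      apply hq
      simp [Function.mem_support, h]
    exact ⟨q + 1, hf, by ring⟩

/-- A Hahn series over `ℚ` is a Puiseux series if the exponents in its support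
have a common denominator. -/
def IsPuiseux [Zero L] (f : HahnSeries ℚ L) : Prop :=
  ∃ d : ℕ, 0 < d ∧ ∀ q ∈ f.support, ∃ m : ℤ, q = (m : ℚ) / d


/-- Evaluation of a bivariate polynomial over `K` at `(X, φ)`, where `X` is the
Puiseux-series variable and `φ` is a Puiseux series. Variable `0` is `X` and
variable `1` is `Y`. -/
noncomputable def evalXY [Field K] [Field L] [Algebra K L] (φ : HahnSeries ℚ L) :
    MvPolynomial (Fin 2) K →ₐ[K] HahnSeries ℚ L :=
  MvPolynomial.aeval ![(HahnSeries.single (1 : ℚ) (1 : L) : HahnSeries ℚ L), φ]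


section Aux

set_option maxHeartbeats 1000000

open Finset

variable [Field L] [CharZero L]

lemma Dp_coeff (f : HahnSeries ℚ L) (q : ℚ) :
    (Dp f).coeff q = ((q : L) + 1) * f.coeff (q + 1) := by
  show (q + 1) • f.coeff (q + 1) = _
  rw [Rat.smul_def, Rat.cast_add, Rat.cast_one]

lemma Dp_support_sub (f : HahnSeries ℚ L) :
    (Dp f).support ⊆ (fun r : ℚ => r - 1) '' f.support := by
  intro q hq
  have hf : f.coeff (q + 1) ≠ 0 := by
    intro h
    apply hq
    show (q + 1) • f.coeff (q + 1) = 0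
    simp [h]
  exact ⟨q + 1, hf, by ring⟩

set_option linter.unusedSectionVars false in
lemma isPWO_shift (f : HahnSeries ℚ L) :
    ((fun r : ℚ => r - 1) '' f.support).IsPWO :=
  f.isPWO_support.image_of_monotone (fun a b hab => by simpa using sub_le_sub_right hab 1)

lemma Dp_add (f g : HahnSeries ℚ L) : Dp (f + g) = Dp f + Dp g := by
  ext q
  rw [HahnSeries.coeff_add, Dp_coeff, Dp_coeff, Dp_coeff, HahnSeries.coeff_add]
  ring

lemma Dp_mul (f g : HahnSeries ℚ L) : Dp (f * g) = Dp f * g + f * Dp g := by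
  ext q
  rw [HahnSeries.coeff_add,
    HahnSeries.coeff_mul_left' (isPWO_shift f) (Dp_support_sub f),
    HahnSeries.coeff_mul_right' (isPWO_shift g) (Dp_support_sub g),
    Dp_coeff, HahnSeries.coeff_mul, Finset.mul_sum]
  have h1 : ∑ ij ∈ Finset.antidiagonal (isPWO_shift f) g.isPWO_support q,
      (Dp f).coeff ij.1 * g.coeff ij.2
      = ∑ ij ∈ Finset.antidiagonal f.isPWO_support g.isPWO_support (q + 1),
        ((ij.1 : L) * f.coeff ij.1) * g.coeff ij.2 := by
    refine Finset.sum_nbij' (fun ij => (ij.1 + 1, ij.2)) (fun ij => (ij.1 - 1, ij.2))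
      ?_ ?_ ?_ ?_ ?_
    · rintro ⟨i, j⟩ hm
      rw [Finset.mem_antidiagonal] at hm ⊢
      obtain ⟨⟨r, hr, hri⟩, hj, hsum⟩ := hm
      dsimp at hri hsum ⊢
      have hri' : i + 1 = r := by linarith
      exact ⟨hri' ▸ hr, hj, by linarith⟩
    · rintro ⟨i, j⟩ hm
      rw [Finset.mem_antidiagonal] at hm ⊢
      obtain ⟨hi, hj, hsum⟩ := hm
      exact ⟨⟨i, hi, rfl⟩, hj, by dsimp at hsum ⊢; linarith⟩
    · rintro ⟨i, j⟩ _; simp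
    · rintro ⟨i, j⟩ _; simp
    · rintro ⟨i, j⟩ _
      rw [Dp_coeff]
      dsimp only
      push_cast
      ring
  have h2 : ∑ ij ∈ Finset.antidiagonal f.isPWO_support (isPWO_shift g) q,
      f.coeff ij.1 * (Dp g).coeff ij.2
      = ∑ ij ∈ Finset.antidiagonal f.isPWO_support g.isPWO_support (q + 1),
        f.coeff ij.1 * ((ij.2 : L) * g.coeff ij.2) := by
    refine Finset.sum_nbij' (fun ij => (ij.1, ij.2 + 1)) (fun ij => (ij.1, ij.2 - 1))
      ?_ ?_ ?_ ?_ ?_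
    · rintro ⟨i, j⟩ hm
      rw [Finset.mem_antidiagonal] at hm ⊢
      obtain ⟨hi, ⟨r, hr, hri⟩, hsum⟩ := hm
      dsimp at hri hsum ⊢
      have hri' : j + 1 = r := by linarith
      exact ⟨hi, hri' ▸ hr, by linarith⟩
    · rintro ⟨i, j⟩ hm
      rw [Finset.mem_antidiagonal] at hm ⊢
      obtain ⟨hi, hj, hsum⟩ := hm
      exact ⟨hi, ⟨j, hj, rfl⟩, by dsimp at hsum ⊢; linarith⟩
    · rintro ⟨i, j⟩ _; simp
    · rintro ⟨i, j⟩ _; simp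
    · rintro ⟨i, j⟩ _
      rw [Dp_coeff]
      dsimp only
      push_cast
      ring
  rw [h1, h2, ← Finset.sum_add_distrib]
  refine Finset.sum_congr rfl ?_
  rintro ⟨i, j⟩ hm
  rw [Finset.mem_antidiagonal] at hm
  obtain ⟨_, _, hsum⟩ := hm
  dsimp at hsum ⊢
  have hc : ((i + j : ℚ) : L) = ((q + 1 : ℚ) : L) := by rw [hsum]
  push_cast at hc
  have : ((q : L) + 1) = (i : L) + (j : L) := by linear_combination -hc
  rw [this]
  ring

lemma Dp_single_zero (c : L) : Dp (HahnSeries.single (0 : ℚ) c) = 0 := by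
  ext q
  rw [Dp_coeff, HahnSeries.coeff_zero, HahnSeries.coeff_single]
  rcases eq_or_ne (q + 1) 0 with h | h
  · rw [if_pos h]
    have : (q : L) + 1 = 0 := by exact_mod_cast congrArg (fun r : ℚ => (r : L)) h
    rw [this, zero_mul]
  · rw [if_neg h, mul_zero]

lemma Dp_one : Dp (1 : HahnSeries ℚ L) = 0 := by
  rw [← HahnSeries.single_zero_one]; exact Dp_single_zero 1

lemma Dp_X : Dp (HahnSeries.single (1 : ℚ) (1 : L)) = 1 := by
  ext q
  rw [Dp_coeff, HahnSeries.coeff_single, HahnSeries.coeff_one]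
  rcases eq_or_ne q 0 with rfl | h
  · simp
  · rw [if_neg h, if_neg (by intro hc; exact h (by linarith)), mul_zero]

lemma Dp_pow (f : HahnSeries ℚ L) (n : ℕ) :
    Dp (f ^ (n + 1)) = ((n : HahnSeries ℚ L) + 1) * f ^ n * Dp f := by
  induction n with
  | zero => simp [Dp_mul]
  | succ m ih =>
    rw [pow_succ, Dp_mul, ih]
    push_cast
    ring

variable {K : Type*}

lemma evalXY_X0 [Field K] [Algebra K L] (φ : HahnSeries ℚ L) :
    evalXY (K := K) φ (MvPolynomial.X 0) = HahnSeries.single (1 : ℚ) (1 : L) := by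
  simp [evalXY]

lemma evalXY_X1 [Field K] [Algebra K L] (φ : HahnSeries ℚ L) :
    evalXY (K := K) φ (MvPolynomial.X 1) = φ := by
  simp [evalXY]

lemma Dp_algebraMap [Field K] [Algebra K L] (a : K) :
    Dp (algebraMap K (HahnSeries ℚ L) a) = 0 := by
  have h : algebraMap K (HahnSeries ℚ L) a = HahnSeries.single (0 : ℚ) (algebraMap K L a) := by
    rw [HahnSeries.algebraMap_apply', PowerSeries.algebraMap_apply,
      HahnSeries.ofPowerSeries_C, HahnSeries.C_apply]
  rw [h]
  exact Dp_single_zero _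

lemma Dp_evalXY [Field K] [Algebra K L] (φ : HahnSeries ℚ L) (p : MvPolynomial (Fin 2) K) :
    Dp (evalXY (K := K) φ p) =
      evalXY (K := K) φ (MvPolynomial.pderiv 0 p) +
      evalXY (K := K) φ (MvPolynomial.pderiv 1 p) * Dp φ := by
  induction p using MvPolynomial.induction_on with
  | C a => simp [MvPolynomial.aeval_C, evalXY, Dp_algebraMap]
  | add p q hp hq =>
    rw [map_add, Dp_add, hp, hq]
    simp only [map_add]
    ring
  | mul_X p n ih =>
    fin_cases n
    · have h0 : (MvPolynomial.pderiv (0 : Fin 2)) (MvPolynomial.X (0 : Fin 2) : MvPolynomial (Fin 2) K) = 1 := by simp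
      have h1 : (MvPolynomial.pderiv (1 : Fin 2)) (MvPolynomial.X (0 : Fin 2) : MvPolynomial (Fin 2) K) = 0 := by simp
      simp only [Fin.zero_eta, Fin.isValue, map_mul, MvPolynomial.pderiv_mul, h0, h1, mul_one,
        mul_zero, add_zero, map_add, map_mul, map_one, map_zero, zero_mul, evalXY_X0, Dp_mul,
        Dp_X, ih]
      ring
    · have h0 : (MvPolynomial.pderiv (0 : Fin 2)) (MvPolynomial.X (1 : Fin 2) : MvPolynomial (Fin 2) K) = 0 := by simp
      have h1 : (MvPolynomial.pderiv (1 : Fin 2)) (MvPolynomial.X (1 : Fin 2) : MvPolynomial (Fin 2) K) = 1 := by simp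
      simp only [Fin.mk_one, Fin.isValue, map_mul, MvPolynomial.pderiv_mul, h0, h1, mul_one,
        mul_zero, add_zero, map_add, map_mul, map_one, map_zero, zero_mul, evalXY_X1, Dp_mul,
        Dp_X, ih]
      ring

open MvPolynomial in
lemma mem_support_pderiv {σ R : Type*} [CommSemiring R] [DecidableEq σ] (i : σ)
    (p : MvPolynomial σ R) (m : σ →₀ ℕ) (hm : m ∈ (pderiv i p).support) :
    ∃ m' ∈ p.support, m' i ≠ 0 ∧ m = m' - Finsupp.single i 1 := by
  classical
  have hrep : pderiv i p
      = ∑ m' ∈ p.support, monomial (m' - Finsupp.single i 1) (coeff m' p * (m' i : R)) := by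
    conv_lhs => rw [p.as_sum]
    rw [map_sum]
    refine Finset.sum_congr rfl fun m' _ => ?_
    rw [pderiv_monomial]
  rw [hrep] at hm
  obtain ⟨m', hm', hmem⟩ := Finset.mem_biUnion.1 (support_sum hm)
  rw [support_monomial] at hmem
  split_ifs at hmem with h
  · exact absurd hmem (Finset.notMem_empty m)
  · have hne : m' i ≠ 0 := by
      intro h0
      exact h (by rw [h0, Nat.cast_zero, mul_zero])
    exact ⟨m', hm', hne, Finset.mem_singleton.1 hmem⟩

open MvPolynomial in
lemma degreeOf_pderiv_ne {σ R : Type*} [CommSemiring R] [DecidableEq σ] {i j : σ}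
    (hij : i ≠ j) (p : MvPolynomial σ R) :
    degreeOf i (pderiv j p) ≤ degreeOf i p := by
  rw [degreeOf_le_iff]
  intro m hm
  obtain ⟨m', hm', _, rfl⟩ := mem_support_pderiv j p m hm
  have h1 : ((m' - Finsupp.single j 1 : σ →₀ ℕ)) i = m' i := by
    rw [Finsupp.tsub_apply, Finsupp.single_apply, if_neg (fun h => hij h.symm), Nat.sub_zero]
  rw [h1]
  rw [degreeOf_eq_sup]
  exact Finset.le_sup (f := fun m => m i) hm'

open MvPolynomial in
lemma degreeOf_pderiv_self {σ R : Type*} [CommSemiring R] [DecidableEq σ] (i : σ)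
    (p : MvPolynomial σ R) (h : pderiv i p ≠ 0) :
    degreeOf i (pderiv i p) + 1 ≤ degreeOf i p := by
  have hD : 0 < degreeOf i p := by
    obtain ⟨m, hm⟩ := MvPolynomial.support_nonempty.2 h
    obtain ⟨m', hm', hne, _⟩ := mem_support_pderiv i p m hm
    calc 0 < m' i := Nat.pos_of_ne_zero hne
    _ ≤ degreeOf i p := by rw [degreeOf_eq_sup]; exact Finset.le_sup (f := fun m => m i) hm'
  rw [Nat.add_one_le_iff, degreeOf_lt_iff hD]
  intro m hm
  obtain ⟨m', hm', hne, rfl⟩ := mem_support_pderiv i p m hm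
  have h1 : ((m' - Finsupp.single i 1 : σ →₀ ℕ)) i = m' i - 1 := by
    rw [Finsupp.tsub_apply, Finsupp.single_apply, if_pos rfl]
  rw [h1]
  have h2 : m' i ≤ degreeOf i p := by rw [degreeOf_eq_sup]; exact Finset.le_sup (f := fun m => m i) hm'
  omega

open MvPolynomial in
lemma degreeOf_neg' {σ R : Type*} [CommRing R] (i : σ) (p : MvPolynomial σ R) :
    degreeOf i (-p) = degreeOf i p := by
  rw [degreeOf_eq_sup, degreeOf_eq_sup, support_neg]

open MvPolynomial in
lemma degreeOf_sub_le' {σ R : Type*} [CommRing R] (i : σ) (p q : MvPolynomial σ R) :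
    degreeOf i (p - q) ≤ max (degreeOf i p) (degreeOf i q) := by
  rw [sub_eq_add_neg]
  calc degreeOf i (p + -q) ≤ max (degreeOf i p) (degreeOf i (-q)) := degreeOf_add_le _ _ _
  _ = _ := by rw [degreeOf_neg']

open MvPolynomial in
lemma degreeOf_natCast' {σ R : Type*} [CommSemiring R] (i : σ) (n : ℕ) :
    degreeOf i ((n : MvPolynomial σ R)) = 0 := by
  rw [← map_natCast (C : R →+* MvPolynomial σ R) n, degreeOf_C]

lemma Dp_zero : Dp (0 : HahnSeries ℚ L) = 0 := by
  ext q
  rw [Dp_coeff, HahnSeries.coeff_zero, HahnSeries.coeff_zero, mul_zero]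

open MvPolynomial in
lemma degreeOf_mul_le' {σ R : Type*} [CommSemiring R] (i : σ) {p q : MvPolynomial σ R}
    {m n : ℕ} (hp : degreeOf i p ≤ m) (hq : degreeOf i q ≤ n) :
    degreeOf i (p * q) ≤ m + n :=
  le_trans (degreeOf_mul_le _ _ _) (add_le_add hp hq)

open MvPolynomial in
lemma degreeOf_pderiv_self' {σ R : Type*} [CommSemiring R] [DecidableEq σ] (i : σ)
    (p : MvPolynomial σ R) :
    pderiv i p = 0 ∨ degreeOf i (pderiv i p) + 1 ≤ degreeOf i p := by
  rcases eq_or_ne (pderiv i p) 0 with h | h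
  · exact Or.inl h
  · exact Or.inr (degreeOf_pderiv_self i p h)

open MvPolynomial in
theorem main_aux [Field K] [Algebra K L]
    (φ : HahnSeries ℚ L)
    (g : MvPolynomial (Fin 2) K)
    (hroot : evalXY (K := K) φ g = 0)
    (dX dY : ℕ) (hdX : g.degreeOf 0 = dX) (hdY : g.degreeOf 1 = dY)
    (hgY : evalXY (K := K) φ (MvPolynomial.pderiv 1 g) ≠ 0) :
    ∀ k, 1 ≤ k → ∀ α β : ℕ, k ≤ α → k ≤ β →
    ∃ s : MvPolynomial (Fin 2) K,
      s.degreeOf 0 ≤ (2 * k - 1) * dX ∧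
      (s.degreeOf 1 : ℤ) ≤ (2 * k - 1) * dY - (k - 1) ∧
      Dp^[k] ((HahnSeries.single (1 : ℚ) (1 : L)) ^ α * φ ^ β) *
          (evalXY (K := K) φ (MvPolynomial.pderiv 1 g)) ^ (2 * k - 1) =
        (HahnSeries.single (1 : ℚ) (1 : L)) ^ (α - k) * φ ^ (β - k) *
          evalXY (K := K) φ s := by
  -- key differential relation
  have hDpzero : Dp (0 : HahnSeries ℚ L) = 0 := Dp_zero
  have hkey : Dp φ * evalXY (K := K) φ (pderiv 1 g) = - evalXY (K := K) φ (pderiv 0 g) := by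
    have h := Dp_evalXY (K := K) φ g
    rw [hroot, Dp_zero] at h
    linear_combination -h
  have hgY' : (pderiv 1 g) ≠ 0 := fun h => hgY (by rw [h, map_zero])
  have hdY1 : degreeOf 1 (pderiv 1 g) + 1 ≤ dY := by
    rw [← hdY]; exact degreeOf_pderiv_self 1 g hgY'
  have hdY0 : 1 ≤ dY := by omega
  have hd0gY : degreeOf 0 (pderiv 1 g) ≤ dX := by
    rw [← hdX]; exact degreeOf_pderiv_ne (by decide) g
  have hd1gX : degreeOf 1 (pderiv 0 g) ≤ dY := by
    rw [← hdY]; exact degreeOf_pderiv_ne (by decide) g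
  have hd0gX : (pderiv 0 g) = 0 ∨ degreeOf 0 (pderiv 0 g) + 1 ≤ dX := by
    rcases eq_or_ne (pderiv 0 g) 0 with h | h
    · exact Or.inl h
    · exact Or.inr (by rw [← hdX]; exact degreeOf_pderiv_self 0 g h)
  -- degreeOf facts for X's
  have hX00 : degreeOf (0 : Fin 2) (X (0 : Fin 2) : MvPolynomial (Fin 2) K) = 1 := by
    rw [degreeOf_X]; simp
  have hX01 : degreeOf (0 : Fin 2) (X (1 : Fin 2) : MvPolynomial (Fin 2) K) = 0 := by
    rw [degreeOf_X]; simp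
  have hX10 : degreeOf (1 : Fin 2) (X (0 : Fin 2) : MvPolynomial (Fin 2) K) = 0 := by
    rw [degreeOf_X]; simp
  have hX11 : degreeOf (1 : Fin 2) (X (1 : Fin 2) : MvPolynomial (Fin 2) K) = 1 := by
    rw [degreeOf_X]; simp
  intro k hk
  induction k, hk using Nat.le_induction with
  | base =>
    intro α β hα hβ
    obtain ⟨a, rfl⟩ : ∃ a, α = a + 1 := ⟨α - 1, by omega⟩
    obtain ⟨b, rfl⟩ : ∃ b, β = b + 1 := ⟨β - 1, by omega⟩
    refine ⟨((a + 1 : ℕ) : MvPolynomial (Fin 2) K) * (X 1 * (pderiv 1 g))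
      - ((b + 1 : ℕ) : MvPolynomial (Fin 2) K) * (X 0 * (pderiv 0 g)), ?_, ?_, ?_⟩
    · -- degreeOf 0 bound
      have hA : degreeOf 0 (((a + 1 : ℕ) : MvPolynomial (Fin 2) K) * (X 1 * (pderiv 1 g))
          - ((b + 1 : ℕ) : MvPolynomial (Fin 2) K) * (X 0 * (pderiv 0 g))) ≤ dX := by
        refine le_trans (degreeOf_sub_le' _ _ _) (max_le ?_ ?_)
        · exact le_trans (degreeOf_mul_le' _ (le_of_eq (degreeOf_natCast' _ _))
            (degreeOf_mul_le' _ (le_of_eq hX01) hd0gY)) (by omega)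
        · rcases hd0gX with h | h
          · rw [h, mul_zero, mul_zero]; simp
          · exact le_trans (degreeOf_mul_le' _ (le_of_eq (degreeOf_natCast' _ _))
              (degreeOf_mul_le' _ (le_of_eq hX00) le_rfl)) (by omega)
      omega
    · -- degreeOf 1 bound
      have hA : degreeOf 1 (((a + 1 : ℕ) : MvPolynomial (Fin 2) K) * (X 1 * (pderiv 1 g))
          - ((b + 1 : ℕ) : MvPolynomial (Fin 2) K) * (X 0 * (pderiv 0 g))) ≤ dY := by
        refine le_trans (degreeOf_sub_le' _ _ _) (max_le ?_ ?_)
        · exact le_trans (degreeOf_mul_le' _ (le_of_eq (degreeOf_natCast' _ _))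
            (degreeOf_mul_le' _ (le_of_eq hX11) (le_refl (degreeOf 1 (pderiv 1 g))))) (by omega)
        · exact le_trans (degreeOf_mul_le' _ (le_of_eq (degreeOf_natCast' _ _))
            (degreeOf_mul_le' _ (le_of_eq hX10) hd1gX)) (by omega)
      omega
    · -- the equation, k = 1
      rw [show 2 * 1 - 1 = 1 from rfl, show a + 1 - 1 = a from by omega,
        show b + 1 - 1 = b from by omega, pow_one, Function.iterate_one]
      rw [Dp_mul, Dp_pow, Dp_pow, Dp_X]
      rw [map_sub, map_mul, map_mul, map_mul, map_mul, map_natCast, map_natCast,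
        evalXY_X0, evalXY_X1]
      push_cast
      linear_combination (((b : HahnSeries ℚ L) + 1) * (HahnSeries.single (1 : ℚ) (1 : L)) ^ (a + 1) * φ ^ b) * hkey
  | succ k hk1 ih =>
    intro α β hα hβ
    obtain ⟨s, hs0, hs1, hEq⟩ := ih α β (by omega) (by omega)
    obtain ⟨j, rfl⟩ : ∃ j, k = j + 1 := ⟨k - 1, by omega⟩
    obtain ⟨a, ha⟩ : ∃ a, α - (j + 1) = a + 1 := ⟨α - (j + 2), by omega⟩
    obtain ⟨b, hb⟩ : ∃ b, β - (j + 1) = b + 1 := ⟨β - (j + 2), by omega⟩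
    rw [show 2 * (j + 1) - 1 = 2 * j + 1 from by omega, ha, hb] at hEq
    -- derivative degree facts for s and (pderiv 1 g)
    have hd1sX : degreeOf 1 (pderiv 0 s) ≤ degreeOf 1 s := degreeOf_pderiv_ne (by decide) s
    have hd0sY : degreeOf 0 (pderiv 1 s) ≤ degreeOf 0 s := degreeOf_pderiv_ne (by decide) s
    have hd1gXY : degreeOf 1 (pderiv 0 (pderiv 1 g)) ≤ degreeOf 1 (pderiv 1 g) := degreeOf_pderiv_ne (by decide) (pderiv 1 g)
    have hd0gYY : degreeOf 0 (pderiv 1 (pderiv 1 g)) ≤ degreeOf 0 (pderiv 1 g) := degreeOf_pderiv_ne (by decide) (pderiv 1 g)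
    refine ⟨((a + 1 : ℕ) : MvPolynomial (Fin 2) K) * (X 1 * (s * ((pderiv 1 g) * (pderiv 1 g))))
      - ((b + 1 : ℕ) : MvPolynomial (Fin 2) K) * (X 0 * (s * ((pderiv 0 g) * (pderiv 1 g))))
      + X 0 * (X 1 * (pderiv 0 s * ((pderiv 1 g) * (pderiv 1 g)) - pderiv 1 s * ((pderiv 0 g) * (pderiv 1 g))))
      - ((2 * j + 1 : ℕ) : MvPolynomial (Fin 2) K) *
          (X 0 * (X 1 * (s * (pderiv 0 (pderiv 1 g) * (pderiv 1 g) - pderiv 1 (pderiv 1 g) * (pderiv 0 g))))), ?_, ?_, ?_⟩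
    · -- degreeOf 0 bound
      have hfin0 : degreeOf 0 (((a + 1 : ℕ) : MvPolynomial (Fin 2) K) * (X 1 * (s * ((pderiv 1 g) * (pderiv 1 g))))
          - ((b + 1 : ℕ) : MvPolynomial (Fin 2) K) * (X 0 * (s * ((pderiv 0 g) * (pderiv 1 g))))
          + X 0 * (X 1 * (pderiv 0 s * ((pderiv 1 g) * (pderiv 1 g)) - pderiv 1 s * ((pderiv 0 g) * (pderiv 1 g))))
          - ((2 * j + 1 : ℕ) : MvPolynomial (Fin 2) K) *
              (X 0 * (X 1 * (s * (pderiv 0 (pderiv 1 g) * (pderiv 1 g) - pderiv 1 (pderiv 1 g) * (pderiv 0 g))))))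
          ≤ degreeOf 0 s + 2 * dX := by
        rcases Nat.eq_zero_or_pos dX with hdx0 | hdx0
        · -- dX = 0 : everything with an X-derivative vanishes
          have hD0 : degreeOf 0 s = 0 := by
            rw [hdx0, Nat.mul_zero] at hs0; omega
          have hsx : pderiv 0 s = 0 := by
            rcases degreeOf_pderiv_self' 0 s with h | h
            · exact h
            · omega
          have hgx0 : (pderiv 0 g) = 0 := by
            rcases hd0gX with h | h
            · exact h
            · omega
          have hgy0 : degreeOf 0 (pderiv 1 g) = 0 := by omega
          have hgxy0 : pderiv 0 (pderiv 1 g) = 0 := by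
            rcases degreeOf_pderiv_self' 0 (pderiv 1 g) with h | h
            · exact h
            · omega
          have hcoll : (((a + 1 : ℕ) : MvPolynomial (Fin 2) K) * (X 1 * (s * ((pderiv 1 g) * (pderiv 1 g))))
              - ((b + 1 : ℕ) : MvPolynomial (Fin 2) K) * (X 0 * (s * ((pderiv 0 g) * (pderiv 1 g))))
              + X 0 * (X 1 * (pderiv 0 s * ((pderiv 1 g) * (pderiv 1 g)) - pderiv 1 s * ((pderiv 0 g) * (pderiv 1 g))))
              - ((2 * j + 1 : ℕ) : MvPolynomial (Fin 2) K) *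
                  (X 0 * (X 1 * (s * (pderiv 0 (pderiv 1 g) * (pderiv 1 g) - pderiv 1 (pderiv 1 g) * (pderiv 0 g))))))
              = ((a + 1 : ℕ) : MvPolynomial (Fin 2) K) * (X 1 * (s * ((pderiv 1 g) * (pderiv 1 g)))) := by
            rw [hsx, hgx0, hgxy0]
            ring
          rw [hcoll]
          have := degreeOf_mul_le' 0 (le_of_eq (degreeOf_natCast' (0 : Fin 2) (a + 1)))
            (degreeOf_mul_le' 0 (le_of_eq hX01)
              (degreeOf_mul_le' 0 (le_of_eq hD0) (degreeOf_mul_le' 0 (le_of_eq hgy0) (le_of_eq hgy0))))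
          omega
        · -- dX ≥ 1
          have h3a : degreeOf 0 (pderiv 0 s * ((pderiv 1 g) * (pderiv 1 g))) ≤ degreeOf 0 s + 2 * dX - 1 := by
            rcases degreeOf_pderiv_self' 0 s with h | h
            · rw [h, zero_mul, degreeOf_zero]; exact Nat.zero_le _
            · exact le_trans (degreeOf_mul_le' _ le_rfl
                (degreeOf_mul_le' _ hd0gY hd0gY)) (by omega)
          have h3b : degreeOf 0 (pderiv 1 s * ((pderiv 0 g) * (pderiv 1 g))) ≤ degreeOf 0 s + 2 * dX - 1 := by
            rcases hd0gX with h | h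
            · rw [h, zero_mul, mul_zero, degreeOf_zero]; exact Nat.zero_le _
            · exact le_trans (degreeOf_mul_le' _ hd0sY
                (degreeOf_mul_le' _ le_rfl hd0gY)) (by omega)
          have h4a : degreeOf 0 (pderiv 0 (pderiv 1 g) * (pderiv 1 g)) ≤ 2 * dX - 1 := by
            rcases degreeOf_pderiv_self' 0 (pderiv 1 g) with h | h
            · rw [h, zero_mul, degreeOf_zero]; exact Nat.zero_le _
            · exact le_trans (degreeOf_mul_le' _ le_rfl hd0gY) (by omega)
          have h4b : degreeOf 0 (pderiv 1 (pderiv 1 g) * (pderiv 0 g)) ≤ 2 * dX - 1 := by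
            rcases hd0gX with h | h
            · rw [h, mul_zero, degreeOf_zero]; exact Nat.zero_le _
            · exact le_trans (degreeOf_mul_le' _ (le_trans hd0gYY hd0gY) le_rfl) (by omega)
          have hB1 : degreeOf 0 (((a + 1 : ℕ) : MvPolynomial (Fin 2) K) * (X 1 * (s * ((pderiv 1 g) * (pderiv 1 g)))))
              ≤ 0 + (0 + (degreeOf 0 s + (dX + dX))) :=
            degreeOf_mul_le' _ (le_of_eq (degreeOf_natCast' _ _))
              (degreeOf_mul_le' _ (le_of_eq hX01)
                (degreeOf_mul_le' _ le_rfl (degreeOf_mul_le' _ hd0gY hd0gY)))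
          have hB2 : degreeOf 0 (((b + 1 : ℕ) : MvPolynomial (Fin 2) K) * (X 0 * (s * ((pderiv 0 g) * (pderiv 1 g)))))
              ≤ degreeOf 0 s + 2 * dX := by
            rcases hd0gX with h | h
            · rw [h, zero_mul, mul_zero, mul_zero, mul_zero, degreeOf_zero]; exact Nat.zero_le _
            · exact le_trans (degreeOf_mul_le' _ (le_of_eq (degreeOf_natCast' _ _))
                (degreeOf_mul_le' _ (le_of_eq hX00) (degreeOf_mul_le' _ le_rfl
                  (degreeOf_mul_le' _ le_rfl hd0gY)))) (by omega)
          have hB3 : degreeOf 0 (X 0 * (X 1 *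
                (pderiv 0 s * ((pderiv 1 g) * (pderiv 1 g)) - pderiv 1 s * ((pderiv 0 g) * (pderiv 1 g)))))
              ≤ 1 + (0 + (degreeOf 0 s + 2 * dX - 1)) :=
            degreeOf_mul_le' _ (le_of_eq hX00) (degreeOf_mul_le' _ (le_of_eq hX01)
              (le_trans (degreeOf_sub_le' _ _ _) (max_le h3a h3b)))
          have hB4 : degreeOf 0 (((2 * j + 1 : ℕ) : MvPolynomial (Fin 2) K) *
                (X 0 * (X 1 * (s * (pderiv 0 (pderiv 1 g) * (pderiv 1 g) - pderiv 1 (pderiv 1 g) * (pderiv 0 g))))))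
              ≤ 0 + (1 + (0 + (degreeOf 0 s + (2 * dX - 1)))) :=
            degreeOf_mul_le' _ (le_of_eq (degreeOf_natCast' _ _))
              (degreeOf_mul_le' _ (le_of_eq hX00) (degreeOf_mul_le' _ (le_of_eq hX01)
                (degreeOf_mul_le' _ le_rfl
                  (le_trans (degreeOf_sub_le' _ _ _) (max_le h4a h4b)))))
          have hC1 := le_trans (degreeOf_add_le 0 _ _) (max_le_max
            (le_trans (degreeOf_sub_le' 0 _ _) (max_le_max hB1 hB2)) hB3)
          have hC2 := le_trans (degreeOf_sub_le' 0 _ _) (max_le_max hC1 hB4)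
          omega
      calc degreeOf 0 _ ≤ degreeOf 0 s + 2 * dX := hfin0
        _ ≤ (2 * (j + 1) - 1) * dX + 2 * dX := by omega
        _ = (2 * (j + 2) - 1) * dX := by
            rw [show 2 * (j + 1) - 1 = 2 * j + 1 from by omega,
              show 2 * (j + 2) - 1 = 2 * j + 3 from by omega]
            ring
    · -- degreeOf 1 bound
      have hd1gY' : degreeOf 1 (pderiv 1 g) ≤ dY - 1 := by omega
      have hfin1 : degreeOf 1 (((a + 1 : ℕ) : MvPolynomial (Fin 2) K) * (X 1 * (s * ((pderiv 1 g) * (pderiv 1 g))))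
          - ((b + 1 : ℕ) : MvPolynomial (Fin 2) K) * (X 0 * (s * ((pderiv 0 g) * (pderiv 1 g))))
          + X 0 * (X 1 * (pderiv 0 s * ((pderiv 1 g) * (pderiv 1 g)) - pderiv 1 s * ((pderiv 0 g) * (pderiv 1 g))))
          - ((2 * j + 1 : ℕ) : MvPolynomial (Fin 2) K) *
              (X 0 * (X 1 * (s * (pderiv 0 (pderiv 1 g) * (pderiv 1 g) - pderiv 1 (pderiv 1 g) * (pderiv 0 g))))))
          ≤ degreeOf 1 s + (2 * dY - 1) := by
        have h3a : degreeOf 1 (pderiv 0 s * ((pderiv 1 g) * (pderiv 1 g))) ≤ degreeOf 1 s + 2 * dY - 2 :=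
          le_trans (degreeOf_mul_le' _ hd1sX (degreeOf_mul_le' _ hd1gY' hd1gY')) (by omega)
        have h3b : degreeOf 1 (pderiv 1 s * ((pderiv 0 g) * (pderiv 1 g))) ≤ degreeOf 1 s + 2 * dY - 2 := by
          rcases degreeOf_pderiv_self' 1 s with h | h
          · rw [h, zero_mul, degreeOf_zero]; exact Nat.zero_le _
          · exact le_trans (degreeOf_mul_le' _ le_rfl
              (degreeOf_mul_le' _ hd1gX hd1gY')) (by omega)
        have h4a : degreeOf 1 (pderiv 0 (pderiv 1 g) * (pderiv 1 g)) ≤ 2 * dY - 2 :=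
          le_trans (degreeOf_mul_le' _ (le_trans hd1gXY hd1gY') hd1gY') (by omega)
        have h4b : degreeOf 1 (pderiv 1 (pderiv 1 g) * (pderiv 0 g)) ≤ 2 * dY - 2 := by
          rcases degreeOf_pderiv_self' 1 (pderiv 1 g) with h | h
          · rw [h, zero_mul, degreeOf_zero]; exact Nat.zero_le _
          · exact le_trans (degreeOf_mul_le' _ le_rfl hd1gX) (by omega)
        have hB1 : degreeOf 1 (((a + 1 : ℕ) : MvPolynomial (Fin 2) K) * (X 1 * (s * ((pderiv 1 g) * (pderiv 1 g)))))
            ≤ 0 + (1 + (degreeOf 1 s + ((dY - 1) + (dY - 1)))) :=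
          degreeOf_mul_le' _ (le_of_eq (degreeOf_natCast' _ _))
            (degreeOf_mul_le' _ (le_of_eq hX11)
              (degreeOf_mul_le' _ le_rfl (degreeOf_mul_le' _ hd1gY' hd1gY')))
        have hB2 : degreeOf 1 (((b + 1 : ℕ) : MvPolynomial (Fin 2) K) * (X 0 * (s * ((pderiv 0 g) * (pderiv 1 g)))))
            ≤ 0 + (0 + (degreeOf 1 s + (dY + (dY - 1)))) :=
          degreeOf_mul_le' _ (le_of_eq (degreeOf_natCast' _ _))
            (degreeOf_mul_le' _ (le_of_eq hX10)
              (degreeOf_mul_le' _ le_rfl (degreeOf_mul_le' _ hd1gX hd1gY')))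
        have hB3 : degreeOf 1 (X 0 * (X 1 *
              (pderiv 0 s * ((pderiv 1 g) * (pderiv 1 g)) - pderiv 1 s * ((pderiv 0 g) * (pderiv 1 g)))))
            ≤ 0 + (1 + (degreeOf 1 s + 2 * dY - 2)) :=
          degreeOf_mul_le' _ (le_of_eq hX10) (degreeOf_mul_le' _ (le_of_eq hX11)
            (le_trans (degreeOf_sub_le' _ _ _) (max_le h3a h3b)))
        have hB4 : degreeOf 1 (((2 * j + 1 : ℕ) : MvPolynomial (Fin 2) K) *
              (X 0 * (X 1 * (s * (pderiv 0 (pderiv 1 g) * (pderiv 1 g) - pderiv 1 (pderiv 1 g) * (pderiv 0 g))))))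
            ≤ 0 + (0 + (1 + (degreeOf 1 s + (2 * dY - 2)))) :=
          degreeOf_mul_le' _ (le_of_eq (degreeOf_natCast' _ _))
            (degreeOf_mul_le' _ (le_of_eq hX10) (degreeOf_mul_le' _ (le_of_eq hX11)
              (degreeOf_mul_le' _ le_rfl
                (le_trans (degreeOf_sub_le' _ _ _) (max_le h4a h4b)))))
        have hC1 := le_trans (degreeOf_add_le 1 _ _) (max_le_max
          (le_trans (degreeOf_sub_le' 1 _ _) (max_le_max hB1 hB2)) hB3)
        have hC2 := le_trans (degreeOf_sub_le' 1 _ _) (max_le_max hC1 hB4)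
        omega
      have hZ : (degreeOf 1 (((a + 1 : ℕ) : MvPolynomial (Fin 2) K) * (X 1 * (s * ((pderiv 1 g) * (pderiv 1 g))))
          - ((b + 1 : ℕ) : MvPolynomial (Fin 2) K) * (X 0 * (s * ((pderiv 0 g) * (pderiv 1 g))))
          + X 0 * (X 1 * (pderiv 0 s * ((pderiv 1 g) * (pderiv 1 g)) - pderiv 1 s * ((pderiv 0 g) * (pderiv 1 g))))
          - ((2 * j + 1 : ℕ) : MvPolynomial (Fin 2) K) *
              (X 0 * (X 1 * (s * (pderiv 0 (pderiv 1 g) * (pderiv 1 g) - pderiv 1 (pderiv 1 g) * (pderiv 0 g)))))) : ℤ)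
          ≤ (degreeOf 1 s : ℤ) + 2 * (dY : ℤ) - 1 := by
        omega
      push_cast at hs1
      rw [show ((j + 1 + 1 : ℕ) : ℤ) = (j : ℤ) + 2 from by push_cast; ring]
      linarith [hs1, hZ]
    · -- the equation
      rw [show 2 * (j + 2) - 1 = 2 * j + 3 from by omega,
        show α - (j + 2) = a from by omega, show β - (j + 2) = b from by omega,
        show j + 2 = j + 1 + 1 from rfl, Function.iterate_succ_apply']
      have h1 := congrArg Dp hEq
      simp only [Dp_mul, Dp_pow, Dp_X, Dp_evalXY] at h1
      simp only [map_sub, map_add, map_mul, map_natCast, evalXY_X0, evalXY_X1] at h1 ⊢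
      push_cast at h1 ⊢
      linear_combination (evalXY (K := K) φ (pderiv 1 g)) ^ 2 * h1
        - (((2 * (j : HahnSeries ℚ L) + 1) * evalXY (K := K) φ (pderiv 1 g) *
            (evalXY (K := K) φ (pderiv 0 (pderiv 1 g)) + evalXY (K := K) φ (pderiv 1 (pderiv 1 g)) * Dp φ))) * hEq
        + (-((b : HahnSeries ℚ L) + 1) * (HahnSeries.single (1 : ℚ) (1 : L)) ^ (a + 1) * φ ^ b * evalXY (K := K) φ s *
              evalXY (K := K) φ (pderiv 1 g)
            - (HahnSeries.single (1 : ℚ) (1 : L)) ^ (a + 1) * φ ^ (b + 1) * evalXY (K := K) φ (pderiv 1 s) *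
              evalXY (K := K) φ (pderiv 1 g)
            - (2 * (j : HahnSeries ℚ L) + 1) * (HahnSeries.single (1 : ℚ) (1 : L)) ^ (a + 1) * φ ^ (b + 1) *
              evalXY (K := K) φ s * evalXY (K := K) φ (pderiv 1 (pderiv 1 g))) * hkey
        + (2 * evalXY (K := K) φ (pderiv 1 g) * (HahnSeries.single (1 : ℚ) (1 : L)) ^ (a + 1) * φ ^ b *
            (φ * evalXY (K := K) φ (pderiv 1 s) + ((b : HahnSeries ℚ L) + 1) * evalXY (K := K) φ s)) * hkey

end Aux

set_option maxHeartbeats 1000000 in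
/-- If `φ` is a Puiseux series with minimal polynomial `g` of bidegree `(dX, dY)` and
`ψ = X^α φ^β` with `α, β ≥ k`, then
`ψ⁽ᵏ⁾ = X^(α−k) φ^(β−k) s_k(X, φ) / g_Y(X, φ)^(2k−1)` where
`deg_X s_k ≤ (2k−1)dX` and `deg_Y s_k ≤ (2k−1)dY − (k−1)`. -/
theorem deriv_iterate_monomial_eq_ratio
    [Field K] [CharZero K] [Field L] [Algebra K L] [IsAlgClosure K L]
    (φ : HahnSeries ℚ L) (hP : IsPuiseux φ)
    (g : MvPolynomial (Fin 2) K) (hirr : Irreducible g)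
    (hroot : evalXY φ g = 0)
    (dX dY : ℕ) (hdX : g.degreeOf 0 = dX) (hdY : g.degreeOf 1 = dY)
    (hgY : evalXY φ (MvPolynomial.pderiv 1 g) ≠ 0)
    (k α β : ℕ) (hk : 1 ≤ k) (hα : k ≤ α) (hβ : k ≤ β) :
    ∃ s : MvPolynomial (Fin 2) K,
      s.degreeOf 0 ≤ (2 * k - 1) * dX ∧
      (s.degreeOf 1 : ℤ) ≤ (2 * k - 1) * dY - (k - 1) ∧
      Dp^[k] ((HahnSeries.single (1 : ℚ) (1 : L)) ^ α * φ ^ β) *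
          (evalXY φ (MvPolynomial.pderiv 1 g)) ^ (2 * k - 1) =
        (HahnSeries.single (1 : ℚ) (1 : L)) ^ (α - k) * φ ^ (β - k) *
          evalXY φ s := by
  haveI : CharZero L := charZero_of_injective_algebraMap (algebraMap K L).injective
  exact main_aux φ g hroot dX dY hdX hdY hgY k hk α β hα hβ
end

section
/- Let f, g, h ∈ K[X₁,…,X_n] with f = g·h. Then every edge of the Newton polytope of f is parallel to an edge of the Newton polytope of g or to an edge of the Newton polytope of h. -/
variable {K : Type*} {n : ℕ}

/-- `[x, y]` is an edge of the polytope `P`: a one-dimensional extreme (face) of `P`. -/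
def IsEdgeOf (P : Set (Fin n → ℝ)) (x y : Fin n → ℝ) : Prop :=
  x ≠ y ∧ IsExtreme ℝ P (segment ℝ x y)


open MvPolynomial Finset

noncomputable section NPaux

variable {n : ℕ}

/-- exponent vector as a real vector -/
def NPev (m : Fin n →₀ ℕ) : Fin n → ℝ := fun i => (m i : ℝ)

lemma NPev_add (a b : Fin n →₀ ℕ) : NPev (a + b) = NPev a + NPev b := by
  funext i
  simp [NPev]

variable {K : Type*}

open Classical in
/-- maximum of a linear functional over the support -/
def NPmax [CommSemiring K] (ℓ : (Fin n → ℝ) →ₗ[ℝ] ℝ) (p : MvPolynomial (Fin n) K) : ℝ :=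
  if hp : p.support.Nonempty then p.support.sup' hp (fun m => ℓ (NPev m)) else 0

lemma NPle_max [CommSemiring K] {ℓ : (Fin n → ℝ) →ₗ[ℝ] ℝ} {p : MvPolynomial (Fin n) K}
    {m : Fin n →₀ ℕ} (hm : m ∈ p.support) : ℓ (NPev m) ≤ NPmax ℓ p := by
  rw [NPmax, dif_pos ⟨m, hm⟩]
  exact Finset.le_sup' (fun m => ℓ (NPev m)) hm

lemma NPexists_max [CommSemiring K] {ℓ : (Fin n → ℝ) →ₗ[ℝ] ℝ} {p : MvPolynomial (Fin n) K}
    (hp : p ≠ 0) : ∃ m ∈ p.support, ℓ (NPev m) = NPmax ℓ p := by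
  have hne : p.support.Nonempty := support_nonempty.mpr hp
  rw [NPmax, dif_pos hne]
  obtain ⟨m, hm, he⟩ := Finset.exists_mem_eq_sup' hne (fun m => ℓ (NPev m))
  exact ⟨m, hm, he.symm⟩

lemma NPmax_const [CommSemiring K] {ℓ : (Fin n → ℝ) →ₗ[ℝ] ℝ} {p : MvPolynomial (Fin n) K}
    (hp : p ≠ 0) {c : ℝ} (hc : ∀ m ∈ p.support, ℓ (NPev m) = c) : NPmax ℓ p = c := by
  obtain ⟨m, hm, he⟩ := NPexists_max (ℓ := ℓ) hp
  rw [← he, hc m hm]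

open Classical in
/-- the face of the support where the functional is maximized -/
def NPface [CommSemiring K] (ℓ : (Fin n → ℝ) →ₗ[ℝ] ℝ) (p : MvPolynomial (Fin n) K) :
    Finset (Fin n →₀ ℕ) :=
  p.support.filter (fun m => ℓ (NPev m) = NPmax ℓ p)

open Classical in
/-- the initial form of `p` with respect to `ℓ` -/
def NPinit [CommSemiring K] (ℓ : (Fin n → ℝ) →ₗ[ℝ] ℝ) (p : MvPolynomial (Fin n) K) :
    MvPolynomial (Fin n) K :=
  ∑ m ∈ NPface ℓ p, monomial m (coeff m p)

lemma NPcoeff_init [CommSemiring K] (ℓ : (Fin n → ℝ) →ₗ[ℝ] ℝ) (p : MvPolynomial (Fin n) K)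
    (m : Fin n →₀ ℕ) :
    coeff m (NPinit ℓ p) = if ℓ (NPev m) = NPmax ℓ p then coeff m p else 0 := by
  classical
  rw [NPinit, coeff_sum]
  simp_rw [coeff_monomial]
  rw [Finset.sum_ite_eq' (NPface ℓ p) m (fun m' => coeff m' p)]
  by_cases hc : ℓ (NPev m) = NPmax ℓ p
  · by_cases hs : m ∈ p.support
    · rw [if_pos (by simp [NPface, hs, hc]), if_pos hc]
    · rw [if_neg (by simp [NPface, hs]), if_pos hc, MvPolynomial.notMem_support_iff.mp hs]
  · rw [if_neg (by simp [NPface, hc]), if_neg hc]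

lemma NPsupport_init [CommSemiring K] (ℓ : (Fin n → ℝ) →ₗ[ℝ] ℝ) (p : MvPolynomial (Fin n) K) :
    (NPinit ℓ p).support = NPface ℓ p := by
  classical
  ext m
  simp only [MvPolynomial.mem_support_iff, NPcoeff_init, NPface, Finset.mem_filter,
    MvPolynomial.mem_support_iff]
  by_cases hc : ℓ (NPev m) = NPmax ℓ p <;> simp [hc]


lemma NPinit_ne_zero [CommSemiring K] (ℓ : (Fin n → ℝ) →ₗ[ℝ] ℝ) {p : MvPolynomial (Fin n) K}
    (hp : p ≠ 0) : NPinit ℓ p ≠ 0 := by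
  obtain ⟨m, hm, he⟩ := NPexists_max (ℓ := ℓ) hp
  have : m ∈ (NPinit ℓ p).support := by
    rw [NPsupport_init]
    simp [NPface, hm, he]
  intro h
  rw [h] at this
  simp at this

end NPaux

section NPmul
open MvPolynomial Finset
variable {n : ℕ} {K : Type*} [Field K]
variable {ℓ : (Fin n → ℝ) →ₗ[ℝ] ℝ} {g h : MvPolynomial (Fin n) K}

lemma NPcoeff_key {m : Fin n →₀ ℕ}
    (hw : ℓ (NPev m) = NPmax ℓ g + NPmax ℓ h) :
    coeff m (g * h) = coeff m (NPinit ℓ g * NPinit ℓ h) := by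
  classical
  rw [coeff_mul, coeff_mul]
  refine Finset.sum_congr rfl ?_
  rintro ⟨a, b⟩ hab
  have habm : a + b = m := Finset.HasAntidiagonal.mem_antidiagonal.mp hab
  by_cases hca : coeff a g = 0
  · have : coeff a (NPinit ℓ g) = 0 := by rw [NPcoeff_init, hca]; simp
    simp [hca, this]
  by_cases hcb : coeff b h = 0
  · have : coeff b (NPinit ℓ h) = 0 := by rw [NPcoeff_init, hcb]; simp
    simp [hcb, this]
  have ha : a ∈ g.support := MvPolynomial.mem_support_iff.mpr hca
  have hb : b ∈ h.support := MvPolynomial.mem_support_iff.mpr hcb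
  have h1 : ℓ (NPev a) ≤ NPmax ℓ g := NPle_max ha
  have h2 : ℓ (NPev b) ≤ NPmax ℓ h := NPle_max hb
  have h3 : ℓ (NPev a) + ℓ (NPev b) = NPmax ℓ g + NPmax ℓ h := by
    rw [← map_add, ← NPev_add, habm, hw]
  have ea : ℓ (NPev a) = NPmax ℓ g := by linarith
  have eb : ℓ (NPev b) = NPmax ℓ h := by linarith
  rw [NPcoeff_init, NPcoeff_init, if_pos ea, if_pos eb]

lemma NPweight_of_mem_initmul {m : Fin n →₀ ℕ}
    (hm : m ∈ (NPinit ℓ g * NPinit ℓ h).support) :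
    ℓ (NPev m) = NPmax ℓ g + NPmax ℓ h := by
  classical
  have := MvPolynomial.support_mul _ _ hm
  rw [NPsupport_init, NPsupport_init] at this
  obtain ⟨a, ha, b, hb, hab⟩ := Finset.mem_add.mp this
  simp only [NPface, Finset.mem_filter] at ha hb
  rw [← hab, NPev_add, map_add, ha.2, hb.2]

lemma NPmax_mul (hg : g ≠ 0) (hh : h ≠ 0) :
    NPmax ℓ (g * h) = NPmax ℓ g + NPmax ℓ h := by
  classical
  have hgh : g * h ≠ 0 := mul_ne_zero hg hh
  have hinit : NPinit ℓ g * NPinit ℓ h ≠ 0 :=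
    mul_ne_zero (NPinit_ne_zero ℓ hg) (NPinit_ne_zero ℓ hh)
  apply le_antisymm
  · obtain ⟨m, hm, he⟩ := NPexists_max (ℓ := ℓ) hgh
    obtain ⟨a, ha, b, hb, hab⟩ := Finset.mem_add.mp (MvPolynomial.support_mul _ _ hm)
    rw [← he, ← hab, NPev_add, map_add]
    exact add_le_add (NPle_max ha) (NPle_max hb)
  · obtain ⟨m, hm⟩ := support_nonempty.mpr hinit
    have hwm : ℓ (NPev m) = NPmax ℓ g + NPmax ℓ h := NPweight_of_mem_initmul hm
    have hcm : coeff m (g * h) ≠ 0 := by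
      rw [NPcoeff_key hwm]
      exact MvPolynomial.mem_support_iff.mp hm
    have : m ∈ (g * h).support := MvPolynomial.mem_support_iff.mpr hcm
    calc NPmax ℓ g + NPmax ℓ h = ℓ (NPev m) := hwm.symm
    _ ≤ NPmax ℓ (g * h) := NPle_max this

lemma NPinit_mul (hg : g ≠ 0) (hh : h ≠ 0) :
    NPinit ℓ (g * h) = NPinit ℓ g * NPinit ℓ h := by
  classical
  ext m
  rw [NPcoeff_init, NPmax_mul hg hh]
  by_cases hw : ℓ (NPev m) = NPmax ℓ g + NPmax ℓ h
  · rw [if_pos hw, NPcoeff_key hw]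
  · rw [if_neg hw]
    by_contra hc
    exact hw (NPweight_of_mem_initmul (MvPolynomial.mem_support_iff.mpr fun e => hc e.symm))

end NPmul


noncomputable section NPgeo
open Finset

variable {n : ℕ}

/-- dot product with `d` as a linear functional -/
def NPdot (d : Fin n → ℝ) : (Fin n → ℝ) →ₗ[ℝ] ℝ where
  toFun v := ∑ i, v i * d i
  map_add' u v := by
    simp [add_mul, Finset.sum_add_distrib]
  map_smul' c v := by
    simp [Finset.mul_sum, mul_assoc]

lemma NPdot_pos {d : Fin n → ℝ} (hd : d ≠ 0) : 0 < NPdot d d := by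
  obtain ⟨i, hi⟩ := Function.ne_iff.mp hd
  have : (0:ℝ) < d i * d i := mul_self_pos.mpr hi
  exact Finset.sum_pos' (fun j _ => mul_self_nonneg _) ⟨i, Finset.mem_univ i, this⟩

/-- projection along `d` -/
def NPproj (d : Fin n → ℝ) : (Fin n → ℝ) →ₗ[ℝ] (Fin n → ℝ) :=
  LinearMap.id - ((NPdot d d)⁻¹ • NPdot d).smulRight d

lemma NPproj_apply (d v : Fin n → ℝ) :
    NPproj d v = v - ((NPdot d d)⁻¹ * NPdot d v) • d := by
  simp [NPproj, LinearMap.sub_apply, LinearMap.smulRight_apply, LinearMap.smul_apply,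
    smul_eq_mul]

lemma NPproj_d {d : Fin n → ℝ} (hd : d ≠ 0) : NPproj d d = 0 := by
  rw [NPproj_apply, inv_mul_cancel₀ (ne_of_gt (NPdot_pos hd)), one_smul, sub_self]

lemma NPproj_eq_zero {d u : Fin n → ℝ} (hu : NPproj d u = 0) :
    u = ((NPdot d d)⁻¹ * NPdot d u) • d := by
  rw [NPproj_apply, sub_eq_zero] at hu
  exact hu

/-- the `i`-th coordinate functional corrected to vanish on `d` -/
def NPcoord (d : Fin n → ℝ) (i : Fin n) : (Fin n → ℝ) →ₗ[ℝ] ℝ :=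
  LinearMap.proj i - ((NPdot d d)⁻¹ * d i) • NPdot d

lemma NPcoord_apply (d : Fin n → ℝ) (i : Fin n) (v : Fin n → ℝ) :
    NPcoord d i v = v i - ((NPdot d d)⁻¹ * d i) * NPdot d v := by
  simp [NPcoord, LinearMap.sub_apply, LinearMap.smul_apply, smul_eq_mul]

lemma NPcoord_d {d : Fin n → ℝ} (hd : d ≠ 0) (i : Fin n) : NPcoord d i d = 0 := by
  have h0 : NPdot d d ≠ 0 := ne_of_gt (NPdot_pos hd)
  rw [NPcoord_apply]
  field_simp
  ring

/-- two vectors agreeing on all functionals vanishing on `d` differ by a multiple of `d` -/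
lemma NPpair_diff {d u v : Fin n → ℝ} (hd : d ≠ 0)
    (hall : ∀ ℓ' : (Fin n → ℝ) →ₗ[ℝ] ℝ, ℓ' d = 0 → ℓ' u = ℓ' v) :
    ∃ q : ℝ, u - v = q • d := by
  refine ⟨(NPdot d d)⁻¹ * NPdot d (u - v), ?_⟩
  funext i
  have h := hall (NPcoord d i) (NPcoord_d hd i)
  rw [NPcoord_apply, NPcoord_apply] at h
  have hdot : NPdot d (u - v) = NPdot d u - NPdot d v := by rw [map_sub]
  simp only [Pi.sub_apply, Pi.smul_apply, smul_eq_mul]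
  rw [hdot]
  ring_nf
  ring_nf at h
  linarith

/-- Carrying a convex-combination representation into an extreme set. -/
lemma NPmem_convexHull_inter {T : Finset (Fin n → ℝ)} {P E : Set (Fin n → ℝ)}
    (hPc : Convex ℝ P) (hT : ↑T ⊆ P) (hE : IsExtreme ℝ P E) {p : Fin n → ℝ}
    (hpE : p ∈ E) (hp : p ∈ convexHull ℝ (↑T : Set (Fin n → ℝ))) :
    p ∈ convexHull ℝ ((↑T : Set (Fin n → ℝ)) ∩ E) := by
  classical
  obtain ⟨w, hw0, hw1, hwp⟩ := Finset.mem_convexHull.mp hp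
  by_cases hws : ∀ s ∈ T, w s ≠ 0 → s ∈ E
  · rw [← Finset.centerMass_filter_ne_zero] at hwp
    rw [← hwp]
    refine Finset.centerMass_mem_convexHull _ (fun i hi => hw0 i (Finset.mem_filter.mp hi).1)
      ?_ ?_
    · rw [Finset.sum_filter_ne_zero, hw1]; norm_num
    · intro i hi
      obtain ⟨hiT, hiw⟩ := Finset.mem_filter.mp hi
      exact ⟨hiT, hws i hiT hiw⟩
  · exfalso
    push_neg at hws
    obtain ⟨s, hsT, hws0, hsE⟩ := hws
    have hs0 : 0 < w s := lt_of_le_of_ne (hw0 s hsT) (Ne.symm hws0)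
    have hsum : ∑ y ∈ T, w y • y = p := by
      rw [← hwp, Finset.centerMass_eq_of_sum_1 _ _ hw1]; rfl
    have hs1 : w s ≤ 1 := hw1 ▸ Finset.single_le_sum (fun i hi => hw0 i hi) hsT
    have herase := Finset.sum_erase_add T w hsT
    rw [hw1] at herase
    have herase2 : ∑ y ∈ T.erase s, w y • y = p - w s • s := by
      have h := Finset.sum_erase_add T (fun y => w y • y) hsT
      rw [hsum] at h
      exact eq_sub_of_add_eq h
    rcases eq_or_lt_of_le hs1 with h1 | hlt
    · have hrest : ∑ y ∈ T.erase s, w y = 0 := by linarith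
      have hzero : ∀ y ∈ T.erase s, w y = 0 :=
        (Finset.sum_eq_zero_iff_of_nonneg
          (fun i hi => hw0 i (Finset.mem_of_mem_erase hi))).mp hrest
      have hps : p = s := by
        rw [← hsum, ← Finset.sum_erase_add T _ hsT]
        rw [Finset.sum_eq_zero (fun y hy => by rw [hzero y hy, zero_smul])]
        rw [zero_add, h1, one_smul]
      exact hsE (hps ▸ hpE)
    · have h1a : (0:ℝ) < 1 - w s := by linarith
      have hrest' : ∑ y ∈ T.erase s, w y = 1 - w s := by linarith
      set q : Fin n → ℝ := (1 - w s)⁻¹ • (p - w s • s) with hq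
      have hqT : q ∈ convexHull ℝ (↑T : Set (Fin n → ℝ)) := by
        have hcm := Finset.centerMass_mem_convexHull (T.erase s) (w := w) (z := id)
          (fun i hi => hw0 i (Finset.mem_of_mem_erase hi))
          (by rw [hrest']; linarith)
          (fun i hi => Finset.mem_coe.mpr (Finset.mem_of_mem_erase hi))
        have : (T.erase s).centerMass w id = q := by
          rw [Finset.centerMass, hrest']
          simp only [id]
          rw [herase2, hq]
        rwa [this] at hcm
      have hpseg : p ∈ openSegment ℝ s q := by
        refine ⟨w s, 1 - w s, hs0, h1a, by ring, ?_⟩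
        rw [hq, smul_inv_smul₀ (ne_of_gt h1a)]
        abel
      have hres := hE.2 (hT hsT) (convexHull_min hT hPc hqT) hpE hpseg
      exact hsE hres

/-- A point of the hull where the functional attains the max over the vertex set lies in
the hull of the maximizing vertices. -/
lemma NPmem_convexHull_filter {S : Finset (Fin n → ℝ)} {ℓ : (Fin n → ℝ) →ₗ[ℝ] ℝ} {M : ℝ}
    (hM : ∀ s ∈ S, ℓ s ≤ M) {x : Fin n → ℝ}
    (hx : x ∈ convexHull ℝ (↑S : Set (Fin n → ℝ))) (hxM : ℓ x = M) :
    x ∈ convexHull ℝ (↑(S.filter (fun s => ℓ s = M)) : Set (Fin n → ℝ)) := by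
  classical
  obtain ⟨w, hw0, hw1, hwp⟩ := Finset.mem_convexHull.mp hx
  have hsum : ∑ y ∈ S, w y • y = x := by
    rw [← hwp, Finset.centerMass_eq_of_sum_1 _ _ hw1]; rfl
  have hl : ∑ y ∈ S, w y * ℓ y = M := by
    have : ℓ x = ∑ y ∈ S, w y * ℓ y := by
      rw [← hsum, map_sum]
      exact Finset.sum_congr rfl (fun y _ => by rw [map_smul, smul_eq_mul])
    rw [← hxM, this]
  have hz : ∑ y ∈ S, w y * (M - ℓ y) = 0 := by
    have : ∑ y ∈ S, w y * (M - ℓ y) = (∑ y ∈ S, w y) * M - ∑ y ∈ S, w y * ℓ y := by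
      rw [Finset.sum_mul, ← Finset.sum_sub_distrib]
      exact Finset.sum_congr rfl (fun y _ => by ring)
    rw [this, hw1, hl]; ring
  have hzero : ∀ y ∈ S, w y * (M - ℓ y) = 0 :=
    (Finset.sum_eq_zero_iff_of_nonneg
      (fun y hy => mul_nonneg (hw0 y hy) (sub_nonneg.mpr (hM y hy)))).mp hz
  have hkey : ∀ y ∈ S, w y ≠ 0 → ℓ y = M := by
    intro y hy hwy
    have := hzero y hy
    rcases mul_eq_zero.mp this with h | h
    · exact absurd h hwy
    · linarith [sub_eq_zero.mp h]
  rw [← Finset.centerMass_filter_ne_zero] at hwp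
  rw [← hwp]
  refine Finset.centerMass_mem_convexHull _ (fun i hi => hw0 i (Finset.mem_filter.mp hi).1)
    ?_ ?_
  · rw [Finset.sum_filter_ne_zero, hw1]; norm_num
  · intro i hi
    obtain ⟨hiS, hiw⟩ := Finset.mem_filter.mp hi
    exact Finset.mem_coe.mpr (Finset.mem_filter.mpr ⟨hiS, hkey i hiS hiw⟩)

/-- The hull of the maximizing vertices is an extreme subset of the hull. -/
lemma NPisExtreme_filter {S : Finset (Fin n → ℝ)} {ℓ : (Fin n → ℝ) →ₗ[ℝ] ℝ} {M : ℝ}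
    (hM : ∀ s ∈ S, ℓ s ≤ M) :
    IsExtreme ℝ (convexHull ℝ (↑S : Set (Fin n → ℝ)))
      (convexHull ℝ (↑(S.filter (fun s => ℓ s = M)) : Set (Fin n → ℝ))) := by
  classical
  have hsub : (↑(S.filter (fun s => ℓ s = M)) : Set (Fin n → ℝ)) ⊆ ↑S := by
    intro s hs
    exact Finset.mem_coe.mpr (Finset.mem_of_mem_filter _ (Finset.mem_coe.mp hs))
  have hle : ∀ z ∈ convexHull ℝ (↑S : Set (Fin n → ℝ)), ℓ z ≤ M := by
    intro z hz
    have : convexHull ℝ (↑S : Set (Fin n → ℝ)) ⊆ {v | ℓ v ≤ M} :=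
      convexHull_min (fun s hs => hM s (Finset.mem_coe.mp hs)) (convex_halfSpace_le ℓ.isLinear M)
    exact this hz
  have heq : ∀ z ∈ convexHull ℝ (↑(S.filter (fun s => ℓ s = M)) : Set (Fin n → ℝ)), ℓ z = M := by
    intro z hz
    have : convexHull ℝ (↑(S.filter (fun s => ℓ s = M)) : Set (Fin n → ℝ)) ⊆ {v | ℓ v = M} :=
      convexHull_min (fun s hs => (Finset.mem_filter.mp (Finset.mem_coe.mp hs)).2)
        (convex_hyperplane ℓ.isLinear M)
    exact this hz
  constructor
  · exact convexHull_mono hsub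
  · rintro u hu v hv p hpF ⟨a, b, ha, hb, hab, hpab⟩
    have hpM : ℓ p = M := heq p hpF
    have huv : ℓ u = M ∧ ℓ v = M := by
      have h1 : ℓ u ≤ M := hle u hu
      have h2 : ℓ v ≤ M := hle v hv
      have h3 : a * ℓ u + b * ℓ v = M := by
        rw [← hpM, ← hpab, map_add, map_smul, map_smul, smul_eq_mul, smul_eq_mul]
      have huM : ℓ u = M := by
        by_contra hne
        have hlt : ℓ u < M := lt_of_le_of_ne h1 hne
        have h4 : a * ℓ u < a * M := mul_lt_mul_of_pos_left hlt ha
        have h5 : b * ℓ v ≤ b * M := mul_le_mul_of_nonneg_left h2 hb.le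
        have h6 : a * M + b * M = M := by rw [← add_mul, hab, one_mul]
        linarith
      have hvM : ℓ v = M := by
        by_contra hne
        have hlt : ℓ v < M := lt_of_le_of_ne h2 hne
        have h4 : b * ℓ v < b * M := mul_lt_mul_of_pos_left hlt hb
        have h5 : a * ℓ u ≤ a * M := mul_le_mul_of_nonneg_left h1 ha.le
        have h6 : a * M + b * M = M := by rw [← add_mul, hab, one_mul]
        linarith
      exact ⟨huM, hvM⟩
    exact NPmem_convexHull_filter hM hu huv.1

/-- endpoints are extreme points of a segment -/
lemma NPleft_mem_extremePoints {x y : Fin n → ℝ} (hxy : x ≠ y) :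
    x ∈ (segment ℝ x y).extremePoints ℝ := by
  have hd : y - x ≠ 0 := sub_ne_zero.mpr (Ne.symm hxy)
  refine ⟨left_mem_segment ℝ x y, ?_⟩
  rintro u ⟨a₁, b₁, ha₁, hb₁, hab₁, rfl⟩ v ⟨a₂, b₂, ha₂, hb₂, hab₂, rfl⟩
    ⟨p, q, hp, hq, hpq, hx⟩
  have hu : a₁ • x + b₁ • y = x + b₁ • (y - x) := by
    rw [show a₁ = 1 - b₁ by linarith, sub_smul, one_smul, smul_sub]; abel
  have hv : a₂ • x + b₂ • y = x + b₂ • (y - x) := by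
    rw [show a₂ = 1 - b₂ by linarith, sub_smul, one_smul, smul_sub]; abel
  have hc : (p * b₁ + q * b₂) • (y - x) = 0 := by
    have : p • (a₁ • x + b₁ • y) + q • (a₂ • x + b₂ • y) = x := hx
    rw [hu, hv] at this
    have h2 : p • x + q • x = x := by
      rw [← add_smul, hpq, one_smul]
    calc (p * b₁ + q * b₂) • (y - x)
        = (p • (x + b₁ • (y - x)) + q • (x + b₂ • (y - x))) - (p • x + q • x) := by
          rw [smul_add, smul_add, smul_smul, smul_smul, add_smul]; abel
    _ = x - x := by rw [this, h2]
    _ = 0 := sub_self x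
  have hscal : p * b₁ + q * b₂ = 0 := by
    rcases smul_eq_zero.mp hc with h | h
    · exact h
    · exact absurd h hd
  have hb10 : b₁ = 0 := by nlinarith
  have hb20 : b₂ = 0 := by nlinarith
  rw [hu, hb10, zero_smul, add_zero]

/-- Exposing an edge of a polytope: an extreme segment can be separated by a functional
vanishing on the edge direction. -/
lemma NPexists_exposing {S : Finset (Fin n → ℝ)} {x y : Fin n → ℝ} (hxy : x ≠ y)
    (hE : IsExtreme ℝ (convexHull ℝ (↑S : Set (Fin n → ℝ))) (segment ℝ x y)) :
    ∃ ℓ : (Fin n → ℝ) →ₗ[ℝ] ℝ, ℓ (y - x) = 0 ∧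
      ∀ s ∈ S, s ∉ segment ℝ x y → ℓ s < ℓ x := by
  classical
  set d := y - x with hd_def
  have hd : d ≠ 0 := sub_ne_zero.mpr (Ne.symm hxy)
  set B : Finset (Fin n → ℝ) := S.filter (fun s => s ∉ segment ℝ x y) with hB
  set z : Fin n → ℝ := (1/2 : ℝ) • (x + y) with hz_def
  have hz : z ∈ segment ℝ x y :=
    ⟨1/2, 1/2, by norm_num, by norm_num, by norm_num, by rw [hz_def]; module⟩
  have hzx : z = x + (1/2 : ℝ) • d := by rw [hz_def, hd_def]; module
  have hzy : z = y + (-(1/2) : ℝ) • d := by rw [hz_def, hd_def]; module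
  have hBseg : ∀ b ∈ B, b ∉ segment ℝ x y := fun b hb => (Finset.mem_filter.mp hb).2
  have hBS : (↑B : Set (Fin n → ℝ)) ⊆ ↑S := fun b hb =>
    Finset.mem_coe.mpr (Finset.mem_of_mem_filter _ (Finset.mem_coe.mp hb))
  have hxP : x ∈ convexHull ℝ (↑S : Set (Fin n → ℝ)) := hE.1 (left_mem_segment ℝ x y)
  have hyP : y ∈ convexHull ℝ (↑S : Set (Fin n → ℝ)) := hE.1 (right_mem_segment ℝ x y)
  have hzE : z ∈ segment ℝ x y := hz
  -- the projected midpoint is not in the hull of the projected bad points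
  have hnz : NPproj d z ∉ convexHull ℝ (NPproj d '' ↑B) := by
    intro hmem
    rw [← (NPproj d).image_convexHull] at hmem
    obtain ⟨w, hwB, hwz⟩ := hmem
    obtain ⟨c, hc⟩ : ∃ c : ℝ, w - z = c • d := ⟨_, NPproj_eq_zero (by rw [map_sub, hwz, sub_self])⟩
    have hw : w = z + c • d := by rw [← hc]; abel
    have hwP : w ∈ convexHull ℝ (↑S : Set (Fin n → ℝ)) := convexHull_mono hBS hwB
    -- show w lies on the segment, using extremeness
    have hwseg : w ∈ segment ℝ x y := by
      rcases lt_trichotomy c 0 with hcneg | hc0 | hcpos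
      · -- use y as the other endpoint
        have hzo : z ∈ openSegment ℝ y w := by
          have hden : (0:ℝ) < 1/2 - c := by linarith
          refine ⟨(-c)/(1/2 - c), (1/2)/(1/2 - c), div_pos (by linarith) hden,
            div_pos (by norm_num) hden, ?_, ?_⟩
          · have hne : (1/2 : ℝ) - c ≠ 0 := ne_of_gt hden
            rw [← add_div, show (-c + 1/2 : ℝ) = 1/2 - c from by ring, div_self hne]
          · rw [hw, hzy]
            have hne : (1/2 : ℝ) - c ≠ 0 := ne_of_gt hden
            have hne1 : (1 - c*2 : ℝ) ≠ 0 := fun h => hne (by linarith)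
            have hne2 : (2 - c*4 : ℝ) ≠ 0 := fun h => hne (by linarith)
            have hne3 : (1 - 2*c : ℝ) ≠ 0 := fun h => hne (by linarith)
            have hne4 : (2 - 4*c : ℝ) ≠ 0 := fun h => hne (by linarith)
            match_scalars <;> (field_simp; ring)
        exact hE.right_mem_of_mem_openSegment hyP hwP hzE hzo
      · rw [hw, hc0, zero_smul, add_zero]; exact hzE
      · have hzo : z ∈ openSegment ℝ x w := by
          have hden : (0:ℝ) < c + 1/2 := by linarith
          refine ⟨c/(c + 1/2), (1/2)/(c + 1/2), div_pos hcpos hden,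
            div_pos (by norm_num) hden, ?_, ?_⟩
          · have hne : c + (1/2 : ℝ) ≠ 0 := ne_of_gt hden
            rw [← add_div, div_self hne]
          · rw [hw, hzx]
            have hne : c + (1/2 : ℝ) ≠ 0 := ne_of_gt hden
            have hne1 : (c*2 + 1 : ℝ) ≠ 0 := fun h => hne (by linarith)
            have hne2 : (c*4 + 2 : ℝ) ≠ 0 := fun h => hne (by linarith)
            have hne3 : (2*c + 1 : ℝ) ≠ 0 := fun h => hne (by linarith)
            have hne4 : (4*c + 2 : ℝ) ≠ 0 := fun h => hne (by linarith)
            match_scalars <;> (field_simp; ring)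
        exact hE.right_mem_of_mem_openSegment hxP hwP hzE hzo
    -- but then w would be in the hull of B intersected with the segment, which is empty
    have hw2 := NPmem_convexHull_inter (convex_convexHull ℝ _) (hBS.trans (subset_convexHull ℝ _)) hE hwseg hwB
    have hempty : (↑B : Set (Fin n → ℝ)) ∩ segment ℝ x y = ∅ := by
      ext b
      simp only [Set.mem_inter_iff, Set.mem_empty_iff_false, iff_false]
      rintro ⟨hb1, hb2⟩
      exact hBseg b (Finset.mem_coe.mp hb1) hb2
    rw [hempty, convexHull_empty] at hw2
    exact hw2
  -- separate
  have hcl : IsClosed (convexHull ℝ (NPproj d '' ↑B)) :=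
    ((B.finite_toSet).image _).isClosed_convexHull (𝕜 := ℝ)
  obtain ⟨fb, u, hfb, hfu⟩ :=
    geometric_hahn_banach_closed_point (convex_convexHull ℝ _) hcl hnz
  refine ⟨fb.toLinearMap.comp (NPproj d), ?_, ?_⟩
  · rw [LinearMap.comp_apply]
    rw [NPproj_d hd]
    simp
  · intro s hs hsseg
    have hsB : s ∈ B := Finset.mem_filter.mpr ⟨hs, hsseg⟩
    have h1 : fb (NPproj d s) < u :=
      hfb _ (subset_convexHull ℝ _ (Set.mem_image_of_mem _ (Finset.mem_coe.mpr hsB)))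
    have h2 : u < fb (NPproj d z) := hfu
    have h3 : fb (NPproj d z) = fb (NPproj d x) := by
      rw [hzx]
      rw [map_add, map_smul, NPproj_d hd, smul_zero, add_zero]
    simp only [LinearMap.comp_apply, ContinuousLinearMap.coe_coe]
    rw [← h3]
    linarith

noncomputable section NPmain
open MvPolynomial Finset
open scoped Classical

variable {n : ℕ}

lemma NPnp_eq {K : Type*} [CommSemiring K] (p : MvPolynomial (Fin n) K) :
    newtonPolytope p = convexHull ℝ (↑(p.support.image NPev) : Set (Fin n → ℝ)) := by
  rw [newtonPolytope, ← Finset.coe_image]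
  rfl

lemma NPedge_of_face {K : Type*} [Field K] {p : MvPolynomial (Fin n) K}
    (ℓ : (Fin n → ℝ) →ₗ[ℝ] ℝ) {d : Fin n → ℝ} (hd : d ≠ 0)
    (hcol : ∀ a ∈ NPface ℓ p, ∀ b ∈ NPface ℓ p, ∃ q : ℝ, NPev a - NPev b = q • d)
    (hne2 : ∃ a ∈ NPface ℓ p, ∃ b ∈ NPface ℓ p, NPev a ≠ NPev b) :
    ∃ x' y', IsEdgeOf (newtonPolytope p) x' y' ∧ ∃ t : ℝ, y' - x' = t • d := by
  set T : Finset (Fin n → ℝ) := (NPface ℓ p).image NPev with hT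
  have hTmem : ∀ s ∈ T, ∃ a ∈ NPface ℓ p, NPev a = s := fun s hs => by
    simpa using Finset.mem_image.mp hs
  have hTcol : ∀ s ∈ T, ∀ t ∈ T, ∃ q : ℝ, s - t = q • d := by
    intro s hs t ht
    obtain ⟨a, ha, rfl⟩ := hTmem s hs
    obtain ⟨b, hb, rfl⟩ := hTmem t ht
    exact hcol a ha b hb
  obtain ⟨a, ha, b, hb, hab⟩ := hne2
  have haT : NPev a ∈ T := Finset.mem_image_of_mem _ ha
  have hbT : NPev b ∈ T := Finset.mem_image_of_mem _ hb
  have hTne : T.Nonempty := ⟨NPev a, haT⟩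
  obtain ⟨u, huT, hu⟩ := Finset.exists_mem_eq_sup' hTne (fun s => NPdot d s)
  obtain ⟨v, hvT, hv⟩ := Finset.exists_mem_eq_inf' hTne (fun s => NPdot d s)
  have hddpos := NPdot_pos hd
  obtain ⟨qab, hqab⟩ := hTcol _ haT _ hbT
  have hqab0 : qab ≠ 0 := by
    intro h0
    apply hab
    rw [h0, zero_smul, sub_eq_zero] at hqab
    exact hqab
  have hdotab : NPdot d (NPev a) ≠ NPdot d (NPev b) := by
    intro h0
    have h1 : NPdot d (NPev a - NPev b) = 0 := by rw [map_sub, h0, sub_self]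
    rw [hqab, map_smul, smul_eq_mul] at h1
    rcases mul_eq_zero.mp h1 with h' | h'
    · exact hqab0 h'
    · exact (ne_of_gt hddpos) h'
  have hle : ∀ s ∈ T, NPdot d s ≤ NPdot d u := by
    intro s hs
    rw [← hu]
    exact Finset.le_sup' (fun s => NPdot d s) hs
  have hge : ∀ s ∈ T, NPdot d v ≤ NPdot d s := by
    intro s hs
    rw [← hv]
    exact Finset.inf'_le (fun s => NPdot d s) hs
  have hvu : v ≠ u := by
    intro h0
    have h1 := hle _ haT
    have h2 := hge _ haT
    have h3 := hle _ hbT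
    have h4 := hge _ hbT
    rw [h0] at h2 h4
    exact hdotab (by linarith)
  obtain ⟨q₀, hq₀⟩ := hTcol u huT v hvT
  have hq₀pos : 0 < q₀ := by
    have h1 : NPdot d u - NPdot d v = q₀ * NPdot d d := by
      rw [← map_sub, hq₀, map_smul, smul_eq_mul]
    have h2 : NPdot d v ≤ NPdot d u := hge u huT
    have h3 : q₀ ≠ 0 := by
      intro h0
      apply hvu
      rw [h0, zero_smul, sub_eq_zero] at hq₀
      exact hq₀.symm
    rcases lt_or_gt_of_ne h3 with hneg | hpos
    · nlinarith
    · exact hpos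
  have huveq : u = v + q₀ • d := by rw [← hq₀]; abel
  have hseg : convexHull ℝ (↑T : Set (Fin n → ℝ)) = segment ℝ v u := by
    apply Set.Subset.antisymm
    · apply convexHull_min ?_ (convex_segment v u)
      intro s hs
      have hsT : s ∈ T := Finset.mem_coe.mp hs
      obtain ⟨qs, hqs⟩ := hTcol s hsT v hvT
      have hsv : s = v + qs • d := by rw [← hqs]; abel
      have h1 : NPdot d s - NPdot d v = qs * NPdot d d := by
        rw [← map_sub, hqs, map_smul, smul_eq_mul]
      have h2 : NPdot d u - NPdot d s = (q₀ - qs) * NPdot d d := by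
        have : u - s = (q₀ - qs) • d := by
          rw [huveq, hsv, sub_smul]; abel
        rw [← map_sub, this, map_smul, smul_eq_mul]
      have hqs0 : 0 ≤ qs := by nlinarith [hge s hsT]
      have hqsq : qs ≤ q₀ := by nlinarith [hle s hsT]
      refine ⟨1 - qs/q₀, qs/q₀, ?_, ?_, by ring, ?_⟩
      · have : qs/q₀ ≤ 1 := by
          rw [div_le_one hq₀pos]; exact hqsq
        linarith
      · positivity
      · rw [hsv, huveq]
        have hne : q₀ ≠ 0 := ne_of_gt hq₀pos
        match_scalars <;> field_simp <;> ring
    · rw [← convexHull_pair]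
      apply convexHull_mono
      intro s hs
      rcases Set.mem_insert_iff.mp hs with rfl | hs'
      · exact Finset.mem_coe.mpr hvT
      · rw [Set.mem_singleton_iff.mp hs']
        exact Finset.mem_coe.mpr huT
  -- extremality
  set Sp : Finset (Fin n → ℝ) := p.support.image NPev with hSp
  have hM : ∀ s ∈ Sp, ℓ s ≤ NPmax ℓ p := by
    intro s hs
    obtain ⟨m, hm, rfl⟩ := Finset.mem_image.mp hs
    exact NPle_max hm
  have hfilt : T = Sp.filter (fun s => ℓ s = NPmax ℓ p) := by
    ext s
    simp only [hT, hSp, Finset.mem_image, Finset.mem_filter, NPface]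
    constructor
    · rintro ⟨m, ⟨hm1, hm2⟩, rfl⟩
      exact ⟨⟨m, hm1, rfl⟩, hm2⟩
    · rintro ⟨⟨m, hm1, rfl⟩, hm2⟩
      exact ⟨m, ⟨hm1, hm2⟩, rfl⟩
  have hext : IsExtreme ℝ (convexHull ℝ (↑Sp : Set (Fin n → ℝ)))
      (convexHull ℝ (↑T : Set (Fin n → ℝ))) := by
    rw [hfilt]
    exact NPisExtreme_filter hM
  refine ⟨v, u, ⟨hvu, ?_⟩, q₀, hq₀⟩
  rw [NPnp_eq, ← hSp, ← hseg]
  exact hext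

end NPmain


open MvPolynomial Finset in
open scoped Classical Pointwise in
/-- If `f = g · h`, then every edge of the Newton polytope of `f` is parallel to an
edge of the Newton polytope of `g` or to an edge of the Newton polytope of `h`. -/
theorem edge_newtonPolytope_mul_parallel [Field K]
    (f g h : MvPolynomial (Fin n) K) (hf : f = g * h)
    (x y : Fin n → ℝ) (hxy : IsEdgeOf (newtonPolytope f) x y) :
    (∃ x' y', IsEdgeOf (newtonPolytope g) x' y' ∧ ∃ t : ℝ, y' - x' = t • (y - x)) ∨
    (∃ x' y', IsEdgeOf (newtonPolytope h) x' y' ∧ ∃ t : ℝ, y' - x' = t • (y - x)) := by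
  obtain ⟨hne, hext⟩ := hxy
  rw [NPnp_eq f] at hext
  set Sf : Finset (Fin n → ℝ) := f.support.image NPev with hSf
  -- nonvanishing
  have hf0 : f ≠ 0 := by
    intro h0
    have hx0 : x ∈ convexHull ℝ (↑Sf : Set (Fin n → ℝ)) := hext.1 (left_mem_segment ℝ x y)
    rw [hSf, h0] at hx0
    simp at hx0
  have hg0 : g ≠ 0 := fun h0 => hf0 (by rw [hf, h0, zero_mul])
  have hh0 : h ≠ 0 := fun h0 => hf0 (by rw [hf, h0, mul_zero])
  set d := y - x with hd_def
  have hd : d ≠ 0 := sub_ne_zero.mpr (Ne.symm hne)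
  -- x and y lie in the vertex set
  have hxS : x ∈ (↑Sf : Set (Fin n → ℝ)) := by
    have h1 : x ∈ (segment ℝ x y).extremePoints ℝ := NPleft_mem_extremePoints hne
    exact extremePoints_convexHull_subset (hext.extremePoints_subset_extremePoints h1)
  have hyS : y ∈ (↑Sf : Set (Fin n → ℝ)) := by
    have h1 : y ∈ (segment ℝ x y).extremePoints ℝ := by
      rw [segment_symm]
      exact NPleft_mem_extremePoints (Ne.symm hne)
    exact extremePoints_convexHull_subset (hext.extremePoints_subset_extremePoints h1)
  obtain ⟨mx, hmx, hmxe⟩ := Finset.mem_image.mp (Finset.mem_coe.mp hxS)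
  obtain ⟨my, hmy, hmye⟩ := Finset.mem_image.mp (Finset.mem_coe.mp hyS)
  -- exposing functional
  obtain ⟨ℓ, hℓd, hℓlt⟩ := NPexists_exposing hne hext
  -- functionals vanishing on the direction are constant on the segment
  have hsegval : ∀ (L : (Fin n → ℝ) →ₗ[ℝ] ℝ), L d = 0 → ∀ s ∈ segment ℝ x y, L s = L x := by
    intro L hL s hsseg
    obtain ⟨a, b, ha, hb, hab, rfl⟩ := hsseg
    have hLy : L y = L x := by
      have : L (y - x) = 0 := hL
      rw [map_sub] at this
      linarith
    rw [map_add, map_smul, map_smul, smul_eq_mul, smul_eq_mul, hLy, ← add_mul, hab, one_mul]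
  have hMf : NPmax ℓ f = ℓ x := by
    apply le_antisymm
    · obtain ⟨m, hm, hmax⟩ := NPexists_max (ℓ := ℓ) hf0
      rw [← hmax]
      by_cases hs : NPev m ∈ segment ℝ x y
      · rw [hsegval ℓ hℓd _ hs]
      · exact le_of_lt (hℓlt (NPev m) (Finset.mem_image_of_mem _ hm) hs)
    · rw [← hmxe]
      exact NPle_max hmx
  -- face points lie on the segment
  have hfaceseg : ∀ m ∈ NPface ℓ f, NPev m ∈ segment ℝ x y := by
    intro m hm
    obtain ⟨hm1, hm2⟩ := Finset.mem_filter.mp hm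
    by_contra hs
    have := hℓlt (NPev m) (Finset.mem_image_of_mem _ hm1) hs
    rw [hm2, hMf] at this
    exact lt_irrefl _ this
  have hmxface : mx ∈ NPface ℓ f := Finset.mem_filter.mpr ⟨hmx, by rw [hmxe, hMf]⟩
  have hmyface : my ∈ NPface ℓ f :=
    Finset.mem_filter.mpr ⟨hmy, by
      rw [hmye, hMf]
      exact hsegval ℓ hℓd y (right_mem_segment ℝ x y)⟩
  -- initial forms
  have hg1 : NPinit ℓ g ≠ 0 := NPinit_ne_zero ℓ hg0
  have hh1 : NPinit ℓ h ≠ 0 := NPinit_ne_zero ℓ hh0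
  have hf1 : NPinit ℓ f ≠ 0 := NPinit_ne_zero ℓ hf0
  have hinit : NPinit ℓ f = NPinit ℓ g * NPinit ℓ h := by
    rw [hf]
    exact NPinit_mul hg0 hh0
  -- key constancy on faces of g and h for any functional vanishing on d
  have hconst : ∀ L : (Fin n → ℝ) →ₗ[ℝ] ℝ, L d = 0 →
      (∀ a ∈ NPface ℓ g, ∀ b ∈ NPface ℓ g, L (NPev a) = L (NPev b)) ∧
      (∀ a ∈ NPface ℓ h, ∀ b ∈ NPface ℓ h, L (NPev a) = L (NPev b)) := by
    intro L hL
    have hfc1 : NPmax L (NPinit ℓ f) = L x :=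
      NPmax_const hf1 (fun m hm => by
        rw [NPsupport_init] at hm
        exact hsegval L hL _ (hfaceseg m hm))
    have hfc2 : NPmax (-L) (NPinit ℓ f) = -(L x) :=
      NPmax_const hf1 (fun m hm => by
        rw [NPsupport_init] at hm
        have := hsegval L hL _ (hfaceseg m hm)
        simp only [LinearMap.neg_apply]
        rw [this])
    rw [hinit, NPmax_mul hg1 hh1] at hfc1
    rw [hinit, NPmax_mul hg1 hh1] at hfc2
    obtain ⟨ag, hag⟩ := MvPolynomial.support_nonempty.mpr hg1
    obtain ⟨ah, hah⟩ := MvPolynomial.support_nonempty.mpr hh1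
    have hbg : 0 ≤ NPmax L (NPinit ℓ g) + NPmax (-L) (NPinit ℓ g) := by
      have h1 := NPle_max (ℓ := L) hag
      have h2 := NPle_max (ℓ := -L) hag
      simp only [LinearMap.neg_apply] at h2
      linarith
    have hbh : 0 ≤ NPmax L (NPinit ℓ h) + NPmax (-L) (NPinit ℓ h) := by
      have h1 := NPle_max (ℓ := L) hah
      have h2 := NPle_max (ℓ := -L) hah
      simp only [LinearMap.neg_apply] at h2
      linarith
    have hzg : NPmax L (NPinit ℓ g) + NPmax (-L) (NPinit ℓ g) = 0 := by linarith
    have hzh : NPmax L (NPinit ℓ h) + NPmax (-L) (NPinit ℓ h) = 0 := by linarith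
    constructor
    · intro a ha b hb
      have ha' : a ∈ (NPinit ℓ g).support := by rw [NPsupport_init]; exact ha
      have hb' : b ∈ (NPinit ℓ g).support := by rw [NPsupport_init]; exact hb
      have h1 := NPle_max (ℓ := L) ha'
      have h2 := NPle_max (ℓ := -L) ha'
      have h3 := NPle_max (ℓ := L) hb'
      have h4 := NPle_max (ℓ := -L) hb'
      simp only [LinearMap.neg_apply] at h2 h4
      linarith
    · intro a ha b hb
      have ha' : a ∈ (NPinit ℓ h).support := by rw [NPsupport_init]; exact ha
      have hb' : b ∈ (NPinit ℓ h).support := by rw [NPsupport_init]; exact hb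
      have h1 := NPle_max (ℓ := L) ha'
      have h2 := NPle_max (ℓ := -L) ha'
      have h3 := NPle_max (ℓ := L) hb'
      have h4 := NPle_max (ℓ := -L) hb'
      simp only [LinearMap.neg_apply] at h2 h4
      linarith
  -- collinearity of faces
  have hcolg : ∀ a ∈ NPface ℓ g, ∀ b ∈ NPface ℓ g, ∃ q : ℝ, NPev a - NPev b = q • d := by
    intro a ha b hb
    exact NPpair_diff hd (fun L hL => (hconst L hL).1 a ha b hb)
  have hcolh : ∀ a ∈ NPface ℓ h, ∀ b ∈ NPface ℓ h, ∃ q : ℝ, NPev a - NPev b = q • d := by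
    intro a ha b hb
    exact NPpair_diff hd (fun L hL => (hconst L hL).2 a ha b hb)
  -- case analysis
  by_cases hgbig : ∃ a ∈ NPface ℓ g, ∃ b ∈ NPface ℓ g, NPev a ≠ NPev b
  · exact Or.inl (NPedge_of_face ℓ hd hcolg hgbig)
  by_cases hhbig : ∃ a ∈ NPface ℓ h, ∃ b ∈ NPface ℓ h, NPev a ≠ NPev b
  · exact Or.inr (NPedge_of_face ℓ hd hcolh hhbig)
  -- both faces are single points: contradiction with x ≠ y
  exfalso
  push_neg at hgbig hhbig
  have hsub : (NPinit ℓ f).support ⊆ (NPinit ℓ g).support + (NPinit ℓ h).support := by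
    rw [hinit]
    exact MvPolynomial.support_mul _ _
  have hmx' : mx ∈ (NPinit ℓ f).support := by rw [NPsupport_init]; exact hmxface
  have hmy' : my ∈ (NPinit ℓ f).support := by rw [NPsupport_init]; exact hmyface
  obtain ⟨ax, hax, bx, hbx, habx⟩ := Finset.mem_add.mp (hsub hmx')
  obtain ⟨ay, hay, bz, hbz, haby⟩ := Finset.mem_add.mp (hsub hmy')
  rw [NPsupport_init] at hax hbx hay hbz
  apply hne
  rw [← hmxe, ← hmye, ← habx, ← haby, NPev_add, NPev_add,
    hgbig ax hax ay hay, hhbig bx hbx bz hbz]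
end NPgeo
end
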